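/- arXiv:1511.01184 — 11 statements merged into one kernel-verified Lean document; each statement's English description precedes it below -/
import Mathlib

section
/- Suppose max(λ10, λ20) ≤ 1. Then every solution u : [0,∞) → ℝ² of u' = F(u) with u(0) ∈ Λ satisfies u(t) → (0,0) as t → ∞ (i.e., the extinction equilibrium (0,0) is globally stable on all of Λ). -/
open Filter Topology Set

/-- Mean-field vector field of the generalized stacked contact process. -/
noncomputable def meanField (l10 l20 l21 δ : ℝ) (p : ℝ × ℝ) : ℝ × ℝ :=
  (l10 * p.1 * (1 - p.1 - p.2) - p.1 + δ * p.2 - l21 * p.1 * p.2,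
   l20 * p.2 * (1 - p.1 - p.2) - p.2 - δ * p.2 + l21 * p.1 * p.2)

/-- The feasible region Λ. -/
def lambdaRegion : Set (ℝ × ℝ) := {p | 0 ≤ p.1 ∧ 0 ≤ p.2 ∧ p.1 + p.2 ≤ 1}

/-- The region Λ₊ : if δ = 0 both coordinates positive, if δ > 0 only u₂ > 0. -/
def lambdaPlus (δ : ℝ) : Set (ℝ × ℝ) :=
  {p | p ∈ lambdaRegion ∧ 0 < p.2 ∧ (δ = 0 → 0 < p.1)}

/-- A solution of the mean-field ODE on [0,∞). -/
def IsSolution (l10 l20 l21 δ : ℝ) (u : ℝ → ℝ × ℝ) : Prop :=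
  ∀ t : ℝ, 0 ≤ t → HasDerivWithinAt u (meanField l10 l20 l21 δ (u t)) (Set.Ici 0) t


lemma hdFst {f : ℝ → ℝ × ℝ} {d : ℝ × ℝ} {s : Set ℝ} {x : ℝ}
    (h : HasDerivWithinAt f d s x) : HasDerivWithinAt (fun t => (f t).1) d.1 s x := by
  simpa using h.hasFDerivWithinAt.fst.hasDerivWithinAt

lemma hdSnd {f : ℝ → ℝ × ℝ} {d : ℝ × ℝ} {s : Set ℝ} {x : ℝ}
    (h : HasDerivWithinAt f d s x) : HasDerivWithinAt (fun t => (f t).2) d.2 s x := by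
  simpa using h.hasFDerivWithinAt.snd.hasDerivWithinAt

lemma nonpos_aux {f f' : ℝ → ℝ} {b C : ℝ}
    (hf : ContinuousOn f (Icc 0 b))
    (hf' : ∀ x ∈ Ico 0 b, HasDerivWithinAt f (f' x) (Ici x) x)
    (h0 : f 0 ≤ 0)
    (bound : ∀ x ∈ Ico 0 b, 0 < f x → f' x < C * f x) :
    ∀ x ∈ Icc 0 b, f x ≤ 0 := by
  intro x hx
  have key : ∀ ε : ℝ, 0 < ε → f x ≤ ε * Real.exp (C * x) := by
    intro ε hε
    have hB : ∀ y : ℝ, HasDerivAt (fun y => ε * Real.exp (C * y))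
        (C * (ε * Real.exp (C * y))) y := by
      intro y
      have h1 : HasDerivAt (fun y : ℝ => C * y) C y := by
        simpa using (hasDerivAt_id y).const_mul C
      have h2 := h1.exp.const_mul ε
      rw [show C * (ε * Real.exp (C * y)) = ε * (Real.exp (C * y) * C) by ring]; exact h2
    refine image_le_of_deriv_right_lt_deriv_boundary hf hf' ?_ hB ?_ hx
    · have : (0:ℝ) < ε * Real.exp (C * 0) := by positivity
      linarith
    · intro y hy hfy
      have hpos : 0 < f y := by rw [hfy]; positivity
      have h3 := bound y hy hpos
      calc f' y < C * f y := h3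
        _ = C * (ε * Real.exp (C * y)) := by rw [hfy]
  by_contra hlt
  push_neg at hlt
  have he : 0 < Real.exp (C * x) := Real.exp_pos _
  have h4 := key (f x / (2 * Real.exp (C * x))) (by positivity)
  rw [div_mul_eq_mul_div, mul_comm] at h4
  have : f x ≤ f x / 2 := by
    calc f x ≤ Real.exp (C * x) * f x / (2 * Real.exp (C * x)) := h4
      _ = f x / 2 := by field_simp
  linarith

theorem invariance
    (l10 l20 l21 δ : ℝ) (h10 : 0 ≤ l10) (h20 : 0 ≤ l20) (h21 : 0 ≤ l21) (hδ : 0 ≤ δ)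
    (u : ℝ → ℝ × ℝ) (hu : IsSolution l10 l20 l21 δ u)
    (h0 : u 0 ∈ lambdaRegion) :
    ∀ t, 0 ≤ t → u t ∈ lambdaRegion := by
  have hcont : ContinuousOn u (Ici 0) := fun t ht => (hu t ht).continuousWithinAt
  have hc1 : ContinuousOn (fun s => (u s).1) (Ici 0) := continuous_fst.comp_continuousOn hcont
  have hc2 : ContinuousOn (fun s => (u s).2) (Ici 0) := continuous_snd.comp_continuousOn hcont
  have hd1 : ∀ t, 0 ≤ t → HasDerivWithinAt (fun s => (u s).1)
      ((meanField l10 l20 l21 δ (u t)).1) (Ici 0) t := fun t ht => hdFst (hu t ht)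
  have hd2 : ∀ t, 0 ≤ t → HasDerivWithinAt (fun s => (u s).2)
      ((meanField l10 l20 l21 δ (u t)).2) (Ici 0) t := fun t ht => hdSnd (hu t ht)
  have hclosed : IsClosed lambdaRegion := by
    have : lambdaRegion = {p : ℝ × ℝ | 0 ≤ p.1} ∩ ({p | 0 ≤ p.2} ∩ {p | p.1 + p.2 ≤ 1}) := rfl
    rw [this]
    exact (isClosed_le continuous_const continuous_fst).inter
      ((isClosed_le continuous_const continuous_snd).inter
        (isClosed_le (continuous_fst.add continuous_snd) continuous_const))
  by_contra hbad
  push_neg at hbad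
  obtain ⟨t₀, ht₀, hmem⟩ := hbad
  set Bs : Set ℝ := {t | 0 ≤ t ∧ u t ∉ lambdaRegion} with hBsdef
  have hBne : Bs.Nonempty := ⟨t₀, ht₀, hmem⟩
  have hBbd : BddBelow Bs := ⟨0, fun t ht => ht.1⟩
  set T := sInf Bs with hTdef
  have hT0 : 0 ≤ T := le_csInf hBne fun t ht => ht.1
  have hbefore : ∀ s, 0 ≤ s → s < T → u s ∈ lambdaRegion := by
    intro s hs hsT
    by_contra h
    exact absurd (csInf_le hBbd ⟨hs, h⟩) (not_le.2 hsT)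
  have hUT : u T ∈ lambdaRegion := by
    rcases eq_or_lt_of_le hT0 with h | h
    · rw [← h]; exact h0
    · have hctT : ContinuousWithinAt u (Ici 0) T := hcont T hT0
      have h1 : Tendsto u (𝓝[Ico 0 T] T) (𝓝 (u T)) :=
        hctT.mono_left (nhdsWithin_mono _ fun x hx => hx.1)
      have hne : (𝓝[Ico 0 T] T).NeBot := by
        refine mem_closure_iff_nhdsWithin_neBot.mp ?_
        rw [closure_Ico (ne_of_lt h)]
        exact ⟨hT0, le_refl T⟩
      exact hclosed.mem_of_tendsto h1
        (eventually_mem_nhdsWithin.mono fun x hx => hbefore x hx.1 hx.2)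
  have hUTle : ∀ s, u s ∈ lambdaRegion → |(u s).1| ≤ 1 ∧ |(u s).2| ≤ 1 := by
    intro s hs
    obtain ⟨ha, hb, hc⟩ := hs
    constructor <;> rw [abs_le] <;> constructor <;> linarith
  -- find b > T with coordinate bounds 2 on [0, b]
  obtain ⟨b, hTb, hbound⟩ :
      ∃ b, T < b ∧ ∀ s ∈ Icc (0:ℝ) b, |(u s).1| ≤ 2 ∧ |(u s).2| ≤ 2 := by
    have hctT : ContinuousWithinAt u (Ici 0) T := hcont T hT0
    rw [Metric.continuousWithinAt_iff] at hctT
    obtain ⟨η, hη, hball⟩ := hctT 1 one_pos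
    refine ⟨T + η / 2, by linarith, ?_⟩
    intro s hs
    rcases le_or_gt s T with hsT | hsT
    · have hmem : u s ∈ lambdaRegion := by
        rcases lt_or_eq_of_le hsT with h | h
        · exact hbefore s hs.1 h
        · rw [h]; exact hUT
      have := hUTle s hmem
      constructor <;> linarith [this.1, this.2]
    · have hds : dist s T < η := by
        rw [Real.dist_eq, abs_of_pos (by linarith)]
        have := hs.2; linarith
      have hclose := hball (show s ∈ Ici 0 from hs.1) hds
      rw [Prod.dist_eq] at hclose
      have hb1 : dist (u s).1 (u T).1 < 1 := lt_of_le_of_lt (le_max_left _ _) hclose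
      have hb2 : dist (u s).2 (u T).2 < 1 := lt_of_le_of_lt (le_max_right _ _) hclose
      rw [Real.dist_eq] at hb1 hb2
      have hT1 := hUTle T hUT
      rw [abs_lt] at hb1 hb2
      obtain ⟨hT1a, hT1b⟩ := hT1
      rw [abs_le] at hT1a hT1b
      constructor <;> rw [abs_le] <;> constructor <;> linarith [hb1.1, hb1.2, hb2.1, hb2.2,
        hT1a.1, hT1a.2, hT1b.1, hT1b.2]
  have hb0 : 0 ≤ b := le_trans hT0 (le_of_lt hTb)
  set C : ℝ := 6 * (l10 + l20 + l21 + δ) + 7 with hCdef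
  -- Step A : u₂ ≥ 0 on [0, b]
  have hA : ∀ s ∈ Icc (0:ℝ) b, 0 ≤ (u s).2 := by
    have key := nonpos_aux (f := fun s => -(u s).2)
      (f' := fun s => -((meanField l10 l20 l21 δ (u s)).2)) (b := b) (C := C)
      ((hc2.mono (Icc_subset_Ici_self)).neg)
      (fun x hx => ((hd2 x hx.1).mono (Ici_subset_Ici.2 hx.1)).neg)
      (by linarith [h0.2.1])
      ?_
    · intro s hs
      have hk := key s hs
      linarith
    · intro x hx hpos
      rw [neg_pos] at hpos
      obtain ⟨hb1, hb2⟩ := hbound x ⟨hx.1, le_of_lt hx.2⟩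
      rw [abs_le] at hb1 hb2
      set a := (u x).1
      set c := (u x).2
      have heq : (meanField l10 l20 l21 δ (u x)).2 =
          (l20 * (1 - a - c) - 1 - δ + l21 * a) * c := by
        simp only [meanField]; ring
      rw [heq]
      have hg : l20 * (1 - a - c) - 1 - δ + l21 * a < C := by
        have e1 : l20 * (1 - a - c) ≤ 5 * l20 := by nlinarith [hb1.1, hb2.1]
        have e2 : l21 * a ≤ 2 * l21 := by nlinarith [hb1.2]
        rw [hCdef]; linarith
      have hcneg : 0 < -c := by linarith
      calc -((l20 * (1 - a - c) - 1 - δ + l21 * a) * c)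
          = (l20 * (1 - a - c) - 1 - δ + l21 * a) * (-c) := by ring
        _ < C * (-c) := mul_lt_mul_of_pos_right hg hcneg
        _ = C * -c := rfl
  -- Step B : u₁ ≥ 0 on [0, b]
  have hB : ∀ s ∈ Icc (0:ℝ) b, 0 ≤ (u s).1 := by
    have key := nonpos_aux (f := fun s => -(u s).1)
      (f' := fun s => -((meanField l10 l20 l21 δ (u s)).1)) (b := b) (C := C)
      ((hc1.mono (Icc_subset_Ici_self)).neg)
      (fun x hx => ((hd1 x hx.1).mono (Ici_subset_Ici.2 hx.1)).neg)
      (by linarith [h0.1])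
      ?_
    · intro s hs
      have hk := key s hs
      linarith
    · intro x hx hpos
      rw [neg_pos] at hpos
      obtain ⟨hb1, hb2⟩ := hbound x ⟨hx.1, le_of_lt hx.2⟩
      rw [abs_le] at hb1 hb2
      have hc0 : 0 ≤ (u x).2 := hA x ⟨hx.1, le_of_lt hx.2⟩
      set a := (u x).1
      set c := (u x).2
      have heq : (meanField l10 l20 l21 δ (u x)).1 =
          (l10 * (1 - a - c) - 1 - l21 * c) * a + δ * c := by
        simp only [meanField]; ring
      rw [heq]
      have hg : l10 * (1 - a - c) - 1 - l21 * c < C := by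
        have e1 : l10 * (1 - a - c) ≤ 5 * l10 := by nlinarith [hb1.1, hb2.1]
        have e2 : -(l21 * c) ≤ 2 * l21 := by nlinarith [hb2.1]
        rw [hCdef]; linarith
      have haneg : 0 < -a := by linarith
      have h1 : (l10 * (1 - a - c) - 1 - l21 * c) * (-a) < C * (-a) :=
        mul_lt_mul_of_pos_right hg haneg
      have h2 : 0 ≤ δ * c := mul_nonneg hδ hc0
      calc -((l10 * (1 - a - c) - 1 - l21 * c) * a + δ * c)
          = (l10 * (1 - a - c) - 1 - l21 * c) * (-a) - δ * c := by ring
        _ ≤ (l10 * (1 - a - c) - 1 - l21 * c) * (-a) := by linarith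
        _ < C * (-a) := h1
        _ = C * -a := rfl
  -- Step C : u₁ + u₂ ≤ 1 on [0, b]
  have hCs : ∀ s ∈ Icc (0:ℝ) b, (u s).1 + (u s).2 ≤ 1 := by
    have key := nonpos_aux (f := fun s => (u s).1 + (u s).2 - 1)
      (f' := fun s => (meanField l10 l20 l21 δ (u s)).1 + (meanField l10 l20 l21 δ (u s)).2)
      (b := b) (C := C)
      ((((hc1.mono Icc_subset_Ici_self).add (hc2.mono Icc_subset_Ici_self)).sub
        continuousOn_const))
      (fun x hx => (((hd1 x hx.1).mono (Ici_subset_Ici.2 hx.1)).add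
        ((hd2 x hx.1).mono (Ici_subset_Ici.2 hx.1))).sub_const 1)
      (by linarith [h0.2.2])
      ?_
    · intro s hs
      have hk := key s hs
      linarith
    · intro x hx hpos
      have ha0 : 0 ≤ (u x).1 := hB x ⟨hx.1, le_of_lt hx.2⟩
      have hc0 : 0 ≤ (u x).2 := hA x ⟨hx.1, le_of_lt hx.2⟩
      set a := (u x).1
      set c := (u x).2
      have heq : (meanField l10 l20 l21 δ (u x)).1 + (meanField l10 l20 l21 δ (u x)).2 =
          -((l10 * a + l20 * c) * (a + c - 1)) - (a + c) := by
        simp only [meanField]; ring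
      rw [heq]
      have h1 : 0 ≤ l10 * a + l20 * c := by positivity
      have h2 : 0 ≤ (l10 * a + l20 * c) * (a + c - 1) := mul_nonneg h1 (le_of_lt hpos)
      have hCpos : 0 < C := by rw [hCdef]; nlinarith
      have h3 : 0 < C * (a + c - 1) := mul_pos hCpos hpos
      linarith
  -- contradiction
  obtain ⟨s, hsB, hsb⟩ := exists_lt_of_csInf_lt hBne (show sInf Bs < b from hTb)
  exact hsB.2 ⟨hB s ⟨hsB.1, le_of_lt hsb⟩, hA s ⟨hsB.1, le_of_lt hsb⟩,
    hCs s ⟨hsB.1, le_of_lt hsb⟩⟩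


/-- If max(λ10, λ20) ≤ 1, every solution starting in Λ converges to (0,0). -/
theorem extinction_globally_stable
    (l10 l20 l21 δ : ℝ) (h10 : 0 ≤ l10) (h20 : 0 ≤ l20) (h21 : 0 ≤ l21) (hδ : 0 ≤ δ)
    (hmax : max l10 l20 ≤ 1)
    (u : ℝ → ℝ × ℝ) (hu : IsSolution l10 l20 l21 δ u)
    (h0 : u 0 ∈ lambdaRegion) :
    Tendsto u atTop (𝓝 ((0 : ℝ), (0 : ℝ))) := by
  have hinv := invariance l10 l20 l21 δ h10 h20 h21 hδ u hu h0
  have h110 : l10 ≤ 1 := le_trans (le_max_left _ _) hmax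
  have h120 : l20 ≤ 1 := le_trans (le_max_right _ _) hmax
  have hcont : ContinuousOn u (Ici 0) := fun t ht => (hu t ht).continuousWithinAt
  set V : ℝ → ℝ := fun t => (u t).1 + (u t).2 with hVdef
  set dV : ℝ → ℝ := fun t =>
    (meanField l10 l20 l21 δ (u t)).1 + (meanField l10 l20 l21 δ (u t)).2 with hdVdef
  have hVd : ∀ t, 0 ≤ t → HasDerivWithinAt V (dV t) (Ici 0) t :=
    fun t ht => (hdFst (hu t ht)).add (hdSnd (hu t ht))
  have hVcont : ContinuousOn V (Ici 0) :=
    (continuous_fst.comp_continuousOn hcont).add (continuous_snd.comp_continuousOn hcont)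
  have hV0 : ∀ t, 0 ≤ t → 0 ≤ V t := by
    intro t ht
    obtain ⟨ha, hb, _⟩ := hinv t ht
    show (0:ℝ) ≤ (u t).1 + (u t).2
    linarith
  have hV1 : ∀ t, 0 ≤ t → V t ≤ 1 := fun t ht => (hinv t ht).2.2
  have hdVle : ∀ t, 0 ≤ t → dV t ≤ -(V t) ^ 2 := by
    intro t ht
    obtain ⟨ha, hb, hc⟩ := hinv t ht
    set a := (u t).1
    set c := (u t).2
    have heq : dV t = (l10 * a + l20 * c) * (1 - a - c) - (a + c) := by
      show (meanField l10 l20 l21 δ (u t)).1 + (meanField l10 l20 l21 δ (u t)).2 = _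
      simp only [meanField]; ring
    have e1 : 0 ≤ (a - l10 * a) * (1 - a - c) :=
      mul_nonneg (by nlinarith) (by linarith)
    have e2 : 0 ≤ (c - l20 * c) * (1 - a - c) :=
      mul_nonneg (by nlinarith) (by linarith)
    have hVt : V t = a + c := rfl
    rw [heq, hVt]
    nlinarith
  have hVanti : ∀ s t, 0 ≤ s → s ≤ t → V t ≤ V s := by
    intro s t hs hst
    have key := image_le_of_deriv_right_le_deriv_boundary (f := V) (f' := dV) (a := s) (b := t)
      (B := fun _ => V s) (B' := fun _ => 0)
      (hVcont.mono (fun x hx => le_trans hs hx.1))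
      (fun x hx => (hVd x (le_trans hs hx.1)).mono (Ici_subset_Ici.2 (le_trans hs hx.1)))
      (le_refl _) continuousOn_const
      (fun x _ => hasDerivWithinAt_const x _ (V s))
      (fun x hx => le_trans (hdVle x (le_trans hs hx.1)) (by simpa using neg_nonpos.mpr (sq_nonneg (V x))))
    exact key (right_mem_Icc.2 hst)
  have hVtend : Tendsto V atTop (𝓝 0) := by
    rw [Metric.tendsto_atTop]
    intro ε hε
    have hex : ∃ t0, 0 ≤ t0 ∧ V t0 < ε := by
      by_contra hcon
      push_neg at hcon
      set b : ℝ := (V 0 + 1) / ε ^ 2 with hbdef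
      have hb0 : 0 ≤ b := by
        have := hV0 0 le_rfl
        positivity
      have hVb : V b ≤ V 0 + -ε ^ 2 * b := by
        have key := image_le_of_deriv_right_le_deriv_boundary (f := V) (f' := dV)
          (a := 0) (b := b)
          (B := fun x => V 0 + -ε ^ 2 * x) (B' := fun _ => -ε ^ 2)
          (hVcont.mono (fun x hx => hx.1))
          (fun x hx => (hVd x hx.1).mono (Ici_subset_Ici.2 hx.1))
          (by simp) ?_ ?_ ?_
        · exact key (right_mem_Icc.2 hb0)
        · exact (continuous_const.add (continuous_const.mul continuous_id)).continuousOn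
        · intro x hx
          have : HasDerivWithinAt (fun y : ℝ => V 0 + -ε ^ 2 * y) (-ε ^ 2 * 1) (Ici x) x :=
            ((hasDerivWithinAt_id x _).const_mul (-ε ^ 2)).const_add (V 0)
          simpa using this
        · intro x hx
          have h1 := hdVle x hx.1
          have h2 := hcon x hx.1
          have h3 : ε ^ 2 ≤ (V x) ^ 2 := by nlinarith
          show dV x ≤ -ε ^ 2
          linarith
      have hfin : V b < 0 := by
        have hεne : ε ^ 2 ≠ 0 := by positivity
        have : V 0 + -ε ^ 2 * b = -1 := by
          rw [hbdef]; field_simp; ring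
        rw [this] at hVb
        linarith
      exact absurd (hV0 b hb0) (not_le.2 hfin)
    obtain ⟨t0, ht0, hVt0⟩ := hex
    refine ⟨t0, fun n hn => ?_⟩
    rw [Real.dist_eq, sub_zero, abs_of_nonneg (hV0 n (le_trans ht0 hn))]
    exact lt_of_le_of_lt (hVanti t0 n ht0 hn) hVt0
  have h1 : Tendsto (fun t => (u t).1) atTop (𝓝 0) := by
    refine squeeze_zero' ?_ ?_ hVtend
    · exact (eventually_ge_atTop 0).mono fun t ht => (hinv t ht).1
    · exact (eventually_ge_atTop 0).mono fun t ht => by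
        have := (hinv t ht).2.1
        show (u t).1 ≤ (u t).1 + (u t).2
        linarith
  have h2 : Tendsto (fun t => (u t).2) atTop (𝓝 0) := by
    refine squeeze_zero' ?_ ?_ hVtend
    · exact (eventually_ge_atTop 0).mono fun t ht => (hinv t ht).2.1
    · exact (eventually_ge_atTop 0).mono fun t ht => by
        have := (hinv t ht).1
        show (u t).2 ≤ (u t).1 + (u t).2
        linarith
  have h3 := h1.prodMk_nhds h2
  simpa using h3
end

section
/- Suppose δ = 0, λ10 > 1, the inequality λ20/λ10 + λ21·(1 − 1/λ10) > 1 + δ does NOT hold, and λ10/λ20 − λ21·(1 − 1/λ20) > 1. Then the equilibrium p = (1 − 1/λ10, 0) is globally stable on Λ+: every solution u : [0,∞) → ℝ² of u' = F(u) with u(0) ∈ Λ+ satisfies u(t) → (1 − 1/λ10, 0) as t → ∞. -/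
open Filter Topology Set Real

lemma barrier_Ici {f f' B B' : ℝ → ℝ} {a : ℝ}
    (hf : ∀ t ∈ Ici a, HasDerivWithinAt f (f' t) (Ici a) t)
    (hB : ∀ t ∈ Ici a, HasDerivWithinAt B (B' t) (Ici a) t)
    (h0 : f a ≤ B a)
    (hlt : ∀ t ∈ Ici a, f t = B t → f' t < B' t) :
    ∀ t ∈ Ici a, f t ≤ B t := by
  intro t ht
  have hsub : Icc a t ⊆ Ici a := Icc_subset_Ici_self
  have hfc : ContinuousOn f (Icc a t) :=
    fun s hs => ((hf s (hsub hs)).continuousWithinAt).mono hsub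
  have hBc : ContinuousOn B (Icc a t) :=
    fun s hs => ((hB s (hsub hs)).continuousWithinAt).mono hsub
  exact image_le_of_deriv_right_lt_deriv_boundary' hfc
    (fun x hx => (hf x hx.1).mono (Ici_subset_Ici.2 hx.1))
    h0 hBc (fun x hx => (hB x hx.1).mono (Ici_subset_Ici.2 hx.1))
    (fun x hx => hlt x hx.1) (right_mem_Icc.2 ht)

/-- positivity for `f' = f * g` with continuous data -/
lemma pos_of_linear_ode {f g : ℝ → ℝ}
    (hf : ∀ t ∈ Ici (0:ℝ), HasDerivWithinAt f (f t * g t) (Ici 0) t)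
    (hg : ContinuousOn g (Ici 0)) (h0 : 0 < f 0) :
    ∀ t ∈ Ici (0:ℝ), 0 < f t := by
  intro τ hτ
  obtain ⟨C, hC⟩ := (isCompact_Icc (a := (0:ℝ)) (b := τ)).exists_bound_of_continuousOn
    (hg.mono Icc_subset_Ici_self)
  set K := |C| + 1 with hK
  have hKpos : 0 < K := by positivity
  have hgK : ∀ x ∈ Icc (0:ℝ) τ, |g x| < K := by
    intro x hx
    have := hC x hx
    rw [Real.norm_eq_abs] at this
    have : |g x| ≤ |C| := le_trans this (le_abs_self C)
    linarith
  set B : ℝ → ℝ := fun t => -(f 0 * Real.exp (-K * t)) with hBdef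
  have hBderiv : ∀ x : ℝ, HasDerivAt B (K * (f 0 * Real.exp (-K * x))) x := by
    intro x
    have h1 : HasDerivAt (fun t : ℝ => -K * t) (-K) x := by
      simpa using (hasDerivAt_id x).const_mul (-K)
    have h2 := h1.exp
    have h3 := (h2.const_mul (f 0)).neg
    refine h3.congr_deriv ?_
    ring
  have hsub : Icc (0:ℝ) τ ⊆ Ici (0:ℝ) := Icc_subset_Ici_self
  have hfc : ContinuousOn (fun t => -f t) (Icc 0 τ) :=
    fun s hs => (((hf s (hsub hs)).continuousWithinAt).mono hsub).neg
  have key : ∀ x ∈ Icc (0:ℝ) τ, -f x ≤ B x := by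
    apply image_le_of_deriv_right_lt_deriv_boundary' hfc
      (fun x hx => ((hf x hx.1).neg).mono (Ici_subset_Ici.2 hx.1))
      (by simp [hBdef])
      (fun s _ => (hBderiv s).continuousAt.continuousWithinAt)
      (fun x hx => (hBderiv x).hasDerivWithinAt)
    intro x hx hcontact
    have hfx : f x = f 0 * Real.exp (-K * x) := by
      have := hcontact
      simp only [hBdef] at this
      linarith
    have hfxpos : 0 < f x := by
      rw [hfx]; positivity
    have hgx := hgK x ⟨hx.1, le_of_lt hx.2⟩
    have h1 : -(f x * g x) ≤ f x * |g x| := by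
      rw [neg_le]
      nlinarith [abs_nonneg (g x), neg_abs_le (g x)]
    have h2 : f x * |g x| < f x * K := by
      exact mul_lt_mul_of_pos_left hgx hfxpos
    calc -(f x * g x) ≤ f x * |g x| := h1
      _ < f x * K := h2
      _ = K * (f 0 * Real.exp (-K * x)) := by rw [hfx]; ring
  have := key τ (right_mem_Icc.2 hτ)
  have hexp : 0 < f 0 * Real.exp (-K * τ) := by positivity
  simp only [hBdef] at this
  linarith
lemma mono_Ici {f f' : ℝ → ℝ} {a : ℝ}
    (hf : ∀ t ∈ Ici a, HasDerivWithinAt f (f' t) (Ici a) t)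
    (h : ∀ t ∈ Ici a, 0 ≤ f' t) : MonotoneOn f (Ici a) := by
  have hc : ContinuousOn f (Ici a) := fun s hs => (hf s hs).continuousWithinAt
  have hd : ∀ x ∈ interior (Ici a), HasDerivAt f (f' x) x := by
    intro x hx
    rw [interior_Ici] at hx
    exact (hf x (mem_Ici.2 (le_of_lt hx))).hasDerivAt (Ici_mem_nhds hx)
  refine monotoneOn_of_deriv_nonneg (convex_Ici a) hc
    (fun x hx => (hd x hx).differentiableAt.differentiableWithinAt) ?_
  intro x hx
  rw [(hd x hx).deriv]
  rw [interior_Ici] at hx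
  exact h x (mem_Ici.2 (le_of_lt hx))

lemma anti_Ici {f f' : ℝ → ℝ} {a : ℝ}
    (hf : ∀ t ∈ Ici a, HasDerivWithinAt f (f' t) (Ici a) t)
    (h : ∀ t ∈ Ici a, f' t ≤ 0) : AntitoneOn f (Ici a) := by
  have := mono_Ici (f := fun t => -f t) (f' := fun t => -f' t) (a := a)
    (fun t ht => (hf t ht).neg) (fun t ht => neg_nonneg.2 (h t ht))
  intro x hx y hy hxy
  have := this hx hy hxy
  simpa using this
lemma logistic_upper {l10 : ℝ} (h10 : 1 < l10) {f f' : ℝ → ℝ}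
    (hf : ∀ t ∈ Ici (0:ℝ), HasDerivWithinAt f (f' t) (Ici 0) t)
    (hband : ∀ t ∈ Ici (0:ℝ), f' t ≤ f t * (l10 * (1 - f t) - 1)) :
    ∀ t ∈ Ici (0:ℝ),
      f t - (1 - 1/l10) ≤ max (f 0 - (1 - 1/l10)) 0 * Real.exp (-(l10-1)*t) := by
  have hl10pos : (0:ℝ) < l10 := lt_trans one_pos h10
  set s' : ℝ := 1 - 1/l10 with hs'
  set γ : ℝ := l10 - 1 with hγ
  have hγpos : 0 < γ := by simp [hγ]; linarith
  set C : ℝ := max (f 0 - s') 0 with hC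
  have hCnn : 0 ≤ C := le_max_right _ _
  have key : ∀ ε > (0:ℝ), ∀ t ∈ Ici (0:ℝ),
      f t ≤ s' + (C + ε) * Real.exp (-γ*t) := by
    intro ε hε
    apply barrier_Ici hf
      (B := fun t => s' + (C + ε) * Real.exp (-γ*t))
      (B' := fun t => -(γ * ((C + ε) * Real.exp (-γ*t))))
    · intro t _
      have h1 : HasDerivAt (fun t : ℝ => -γ * t) (-γ) t := by
        simpa using (hasDerivAt_id t).const_mul (-γ)
      have h2 := ((h1.exp.const_mul (C + ε)).const_add s')
      have : HasDerivAt (fun t => s' + (C + ε) * Real.exp (-γ*t))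
          (-(γ * ((C + ε) * Real.exp (-γ*t)))) t := by
        refine h2.congr_deriv ?_; ring
      exact this.hasDerivWithinAt
    · have : Real.exp (-γ*0) = 1 := by norm_num
      rw [this]
      have : f 0 - s' ≤ C := le_max_left _ _
      linarith
    · intro t ht hcontact
      set E : ℝ := (C + ε) * Real.exp (-γ*t) with hE
      have hEpos : 0 < E := by positivity
      have hft : f t = s' + E := hcontact
      have h1 := hband t ht
      have h2 : f t * (l10 * (1 - f t) - 1) = -(l10 * E * (s' + E)) := by
        rw [hft, hs']
        field_simp
        ring
      rw [h2] at h1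
      have hgoal : -(l10 * E * (s' + E)) < -(γ * E) := by
        have hls : l10 * s' = γ := by rw [hs', hγ]; field_simp
        nlinarith [mul_pos (mul_pos hl10pos hEpos) hEpos]
      linarith
  intro t ht
  have hexp1 : Real.exp (-γ*t) ≤ 1 := by
    rw [Real.exp_le_one_iff]
    have := ht
    simp only [mem_Ici] at this
    nlinarith
  have : ∀ ε > (0:ℝ), f t - s' ≤ C * Real.exp (-γ*t) + ε := by
    intro ε hε
    have h1 := key ε hε t ht
    have h2 : (C + ε) * Real.exp (-γ*t) = C * Real.exp (-γ*t) + ε * Real.exp (-γ*t) := by ring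
    have h3 : ε * Real.exp (-γ*t) ≤ ε := by
      nlinarith [Real.exp_pos (-γ*t)]
    linarith
  exact le_of_forall_pos_le_add this
set_option maxHeartbeats 8000000 in
lemma ones_win_core (l10 l20 l21 : ℝ) (h21 : 0 ≤ l21) (h10gt : 1 < l10)
    (h20pos : 0 < l20)
    (hDR0 : l20 / l10 + l21 * (1 - 1 / l10) ≤ 1)
    (h1in2 : 1 < l10 / l20 - l21 * (1 - 1 / l20))
    (P Q : ℝ → ℝ)
    (hP' : ∀ t ∈ Ici (0:ℝ), HasDerivWithinAt P
      (P t * (l10 * (1 - P t - Q t) - 1 - l21 * Q t)) (Ici 0) t)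
    (hQ' : ∀ t ∈ Ici (0:ℝ), HasDerivWithinAt Q
      (Q t * (l20 * (1 - P t - Q t) - 1 + l21 * P t)) (Ici 0) t)
    (hP0 : 0 < P 0) (hQ0 : 0 < Q 0) (hS0 : P 0 + Q 0 ≤ 1) :
    Tendsto P atTop (𝓝 (1 - 1/l10)) ∧ Tendsto Q atTop (𝓝 0) := by
  have hl10pos : (0:ℝ) < l10 := lt_trans one_pos h10gt
  have hl10ne : l10 ≠ 0 := ne_of_gt hl10pos
  set g1 : ℝ → ℝ := fun t => l10 * (1 - P t - Q t) - 1 - l21 * Q t with hg1def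
  set g2 : ℝ → ℝ := fun t => l20 * (1 - P t - Q t) - 1 + l21 * P t with hg2def
  have hPc : ContinuousOn P (Ici 0) := fun s hs => (hP' s hs).continuousWithinAt
  have hQc : ContinuousOn Q (Ici 0) := fun s hs => (hQ' s hs).continuousWithinAt
  have hg1c : ContinuousOn g1 (Ici 0) := by
    simp only [hg1def]
    exact ((continuousOn_const.mul ((continuousOn_const.sub hPc).sub hQc)).sub
      continuousOn_const).sub (continuousOn_const.mul hQc)
  have hg2c : ContinuousOn g2 (Ici 0) := by
    simp only [hg2def]
    exact (((continuousOn_const.mul ((continuousOn_const.sub hPc).sub hQc)).sub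
      continuousOn_const).add (continuousOn_const.mul hPc))
  -- l20 ≤ l10
  have hl21fac : 0 ≤ l21 * (1 - 1/l10) := by
    apply mul_nonneg h21
    have : 1/l10 ≤ 1 := by
      rw [div_le_one hl10pos]; linarith
    linarith
  have hl20le : l20 ≤ l10 := by
    have h1 : l20 / l10 ≤ 1 := by linarith
    rw [div_le_one hl10pos] at h1; linarith
  -- invariance: S ≤ 1
  have hS1 : ∀ t ∈ Ici (0:ℝ), P t + Q t ≤ 1 := by
    apply barrier_Ici (f' := fun t => P t * g1 t + Q t * g2 t)
      (B := fun _ => 1) (B' := fun _ => 0)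
    · exact fun t ht => ((hP' t ht).add (hQ' t ht))
    · exact fun t ht => (hasDerivAt_const t (1:ℝ)).hasDerivWithinAt
    · exact hS0
    · intro t ht hc
      have h0 : 1 - P t - Q t = 0 := by linarith
      have : P t * g1 t + Q t * g2 t = -(P t + Q t) := by
        simp only [hg1def, hg2def]; rw [h0]; ring
      rw [this, hc]; norm_num
  -- positivity
  have hPpos : ∀ t ∈ Ici (0:ℝ), 0 < P t := pos_of_linear_ode hP' hg1c hP0
  have hQpos : ∀ t ∈ Ici (0:ℝ), 0 < Q t := pos_of_linear_ode hQ' hg2c hQ0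
    -- decay of S and P toward s'
  set s' : ℝ := 1 - 1/l10 with hs'def
  set γ : ℝ := l10 - 1 with hγdef
  have hγpos : 0 < γ := by simp only [hγdef]; linarith
  have hs'pos : 0 < s' := by
    simp only [hs'def]
    have : 1/l10 < 1 := by rw [div_lt_one hl10pos]; linarith
    linarith
  set CS : ℝ := max (P 0 + Q 0 - s') 0 with hCSdef
  have hCSnn : 0 ≤ CS := le_max_right _ _
  have hSdecay : ∀ t ∈ Ici (0:ℝ), P t + Q t - s' ≤ CS * Real.exp (-γ*t) := by
    apply logistic_upper h10gt (f' := fun t => P t * g1 t + Q t * g2 t)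
      (fun t ht => (hP' t ht).add (hQ' t ht))
    intro t ht
    have e1 : P t * g1 t + Q t * g2 t
        = (1 - P t - Q t)*(l10*P t + l20*Q t) - (P t + Q t) := by
      simp only [hg1def, hg2def]; ring
    have h1S : 0 ≤ 1 - P t - Q t := by linarith [hS1 t ht]
    simp only [Pi.add_apply]
    nlinarith [mul_nonneg h1S (mul_nonneg (sub_nonneg.2 hl20le) (hQpos t ht).le)]
  set CP : ℝ := max (P 0 - s') 0 with hCPdef
  have hCPnn : 0 ≤ CP := le_max_right _ _
  have hPdecay : ∀ t ∈ Ici (0:ℝ), P t - s' ≤ CP * Real.exp (-γ*t) := by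
    apply logistic_upper h10gt (f' := fun t => P t * g1 t) hP'
    intro t ht
    have e1 : P t * (l10 * (1 - P t) - 1) - P t * g1 t = P t * ((l10 + l21) * Q t) := by
      simp only [hg1def]; ring
    nlinarith [mul_nonneg (hPpos t ht).le
      (mul_nonneg (by linarith : (0:ℝ) ≤ l10 + l21) (hQpos t ht).le)]
  -- integrals
  have hmax : Continuous (fun t : ℝ => max t 0) := continuous_id.max continuous_const
  have hmem : ∀ t : ℝ, max t 0 ∈ Ici (0:ℝ) := fun t => le_max_right t 0
  have hQcc : Continuous (fun t => Q (max t 0)) := hQc.comp_continuous hmax hmem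
  have hPcc : Continuous (fun t => P (max t 0)) := hPc.comp_continuous hmax hmem
  set Qc : ℝ → ℝ := fun t => Q (max t 0) with hQcdef
  set Xc : ℝ → ℝ := fun t => max (P (max t 0) + Q (max t 0) - s') 0 with hXcdef
  have hXcc : Continuous Xc := ((hPcc.add hQcc).sub continuous_const).max continuous_const
  set I : ℝ → ℝ := fun t => ∫ x in (0:ℝ)..t, Qc x with hIdef
  set J : ℝ → ℝ := fun t => ∫ x in (0:ℝ)..t, Xc x with hJdef
  have hIderiv : ∀ t : ℝ, HasDerivAt I (Qc t) t :=
    fun t => (hQcc.integral_hasStrictDerivAt 0 t).hasDerivAt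
  have hJderiv : ∀ t : ℝ, HasDerivAt J (Xc t) t :=
    fun t => (hXcc.integral_hasStrictDerivAt 0 t).hasDerivAt
  have hQceq : ∀ t ∈ Ici (0:ℝ), Qc t = Q t := by
    intro t ht
    simp only [hQcdef]
    rw [max_eq_left ht]
  have hXceq : ∀ t ∈ Ici (0:ℝ), Xc t = max (P t + Q t - s') 0 := by
    intro t ht
    simp only [hXcdef]
    rw [max_eq_left (mem_Ici.1 ht)]
  have hImono : Monotone I := by
    apply monotone_of_deriv_nonneg (fun t => (hIderiv t).differentiableAt)
    intro x; rw [(hIderiv x).deriv]; exact (hQpos _ (hmem x)).le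
  have hI0 : I 0 = 0 := by simp [hIdef]
  have hInn : ∀ t ∈ Ici (0:ℝ), 0 ≤ I t := by
    intro t ht
    have := hImono ht
    rw [hI0] at this; exact this
  have hJle : ∀ t ∈ Ici (0:ℝ), J t ≤ CS / γ := by
    intro t ht
    have hanti : ∀ x : ℝ, HasDerivAt (fun x => -(CS/γ) * Real.exp (-γ*x))
        (CS * Real.exp (-γ*x)) x := by
      intro x
      have h1 : HasDerivAt (fun y : ℝ => -γ * y) (-γ) x := by
        simpa using (hasDerivAt_id x).const_mul (-γ)
      have h2 := h1.exp.const_mul (-(CS/γ))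
      refine h2.congr_deriv ?_
      field_simp
    have hcont : Continuous (fun x : ℝ => CS * Real.exp (-γ*x)) :=
      continuous_const.mul (Real.continuous_exp.comp (continuous_const.mul continuous_id))
    have heq : ∫ x in (0:ℝ)..t, CS * Real.exp (-γ*x)
        = -(CS/γ) * Real.exp (-γ*t) - (-(CS/γ) * Real.exp (-γ*0)) :=
      intervalIntegral.integral_eq_sub_of_hasDerivAt (fun x _ => hanti x)
        (hcont.intervalIntegrable 0 t)
    have hmono : J t ≤ ∫ x in (0:ℝ)..t, CS * Real.exp (-γ*x) := by
      apply intervalIntegral.integral_mono_on ht (hXcc.intervalIntegrable 0 t)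
        (hcont.intervalIntegrable 0 t)
      intro x hx
      have hx0 : x ∈ Ici (0:ℝ) := hx.1
      rw [hXceq x hx0]
      apply max_le
      · exact hSdecay x hx0
      · positivity
    rw [heq] at hmono
    have he1 : Real.exp (-γ*0) = 1 := by norm_num
    rw [he1] at hmono
    have he2 : 0 < Real.exp (-γ*t) := Real.exp_pos _
    have hCSγ : 0 ≤ CS/γ := by positivity
    nlinarith
    -- Lyapunov functionals
  set a : ℝ := (l20 - l21)/l10 with hadef
  set ΔR : ℝ := 1 - l20/l10 - l21*s' with hΔdef
  have hΔnn : 0 ≤ ΔR := by simp only [hΔdef]; linarith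
  have hΦkey : ∀ t ∈ Ici (0:ℝ),
      g2 t - a * g1 t + (ΔR + l21^2 * Q t) = -(l21 * Q t * ΔR) := by
    intro t _
    simp only [hg1def, hg2def, hadef, hΔdef, hs'def]
    field_simp
    ring
  set Φ : ℝ → ℝ := fun t => Real.log (Q t) - a * Real.log (P t) + (ΔR*t + l21^2 * I t)
    with hΦdef
  set Φ' : ℝ → ℝ := fun t =>
    (Q t * g2 t)/(Q t) - a * ((P t * g1 t)/(P t)) + (ΔR + l21^2 * Qc t) with hΦ'def
  have hΦderiv : ∀ t ∈ Ici (0:ℝ), HasDerivWithinAt Φ (Φ' t) (Ici 0) t := by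
    intro t ht
    have hlogQ : HasDerivWithinAt (fun t => Real.log (Q t)) ((Q t * g2 t)/(Q t)) (Ici 0) t :=
      (hQ' t ht).log (ne_of_gt (hQpos t ht))
    have hlogP : HasDerivWithinAt (fun t => Real.log (P t)) ((P t * g1 t)/(P t)) (Ici 0) t :=
      (hP' t ht).log (ne_of_gt (hPpos t ht))
    have hlin : HasDerivAt (fun t : ℝ => ΔR*t + l21^2 * I t) (ΔR + l21^2 * Qc t) t := by
      have h1 : HasDerivAt (fun t : ℝ => ΔR * t) ΔR t := by
        simpa using (hasDerivAt_id t).const_mul ΔR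
      exact h1.add ((hIderiv t).const_mul (l21^2))
    exact (hlogQ.sub (hlogP.const_mul a)).add hlin.hasDerivWithinAt
  have hΦanti : AntitoneOn Φ (Ici 0) := by
    apply anti_Ici hΦderiv
    intro t ht
    simp only [hΦ'def]
    rw [mul_div_cancel_left₀ _ (ne_of_gt (hQpos t ht)),
      mul_div_cancel_left₀ _ (ne_of_gt (hPpos t ht)), hQceq t ht]
    rw [hΦkey t ht]
    have hq := (hQpos t ht).le
    exact neg_nonpos.2 (mul_nonneg (mul_nonneg h21 hq) hΔnn)
  have hΦbound : ∀ t ∈ Ici (0:ℝ),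
      Real.log (Q t) - a * Real.log (P t) + (ΔR*t + l21^2 * I t)
        ≤ Real.log (Q 0) - a * Real.log (P 0) := by
    intro t ht
    have h1 := hΦanti (self_mem_Ici) ht ht
    simp only [hΦdef] at h1
    rw [hI0] at h1
    simpa using h1
  -- lower bound for log P
  set Ψ : ℝ → ℝ := fun t => Real.log (P t) + (l10 * J t + l21 * I t) with hΨdef
  set Ψ' : ℝ → ℝ := fun t => (P t * g1 t)/(P t) + (l10 * Xc t + l21 * Qc t) with hΨ'def
  have hΨderiv : ∀ t ∈ Ici (0:ℝ), HasDerivWithinAt Ψ (Ψ' t) (Ici 0) t := by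
    intro t ht
    have hlogP : HasDerivWithinAt (fun t => Real.log (P t)) ((P t * g1 t)/(P t)) (Ici 0) t :=
      (hP' t ht).log (ne_of_gt (hPpos t ht))
    have hlin : HasDerivAt (fun t : ℝ => l10 * J t + l21 * I t)
        (l10 * Xc t + l21 * Qc t) t := ((hJderiv t).const_mul l10).add ((hIderiv t).const_mul l21)
    exact hlogP.add hlin.hasDerivWithinAt
  have hΨmono : MonotoneOn Ψ (Ici 0) := by
    apply mono_Ici hΨderiv
    intro t ht
    simp only [hΨ'def]
    rw [mul_div_cancel_left₀ _ (ne_of_gt (hPpos t ht)), hQceq t ht, hXceq t ht]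
    have hg1eq : g1 t = -l10*(P t + Q t - s') - l21 * Q t := by
      simp only [hg1def, hs'def]
      field_simp
      ring
    rw [hg1eq]
    have h1 : P t + Q t - s' ≤ max (P t + Q t - s') 0 := le_max_left _ _
    nlinarith
  have hJ0 : J 0 = 0 := by simp [hJdef]
  have hlogPlb : ∀ t ∈ Ici (0:ℝ),
      -Real.log (P t) ≤ -Real.log (P 0) + l10*(CS/γ) + l21 * I t := by
    intro t ht
    have h1 := hΨmono (self_mem_Ici) ht ht
    simp only [hΨdef] at h1
    rw [hI0, hJ0] at h1
    have h2 := hJle t ht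
    nlinarith [hJle t ht]
  -- master bound for log Q
  set na : ℝ := max 0 (-a) with hnadef
  set β : ℝ := l21^2 - na * l21 with hβdef
  set K₀ : ℝ := (Real.log (Q 0) - a * Real.log (P 0))
    + na * (l10*(CS/γ) - Real.log (P 0)) with hK₀def
  have hnann : 0 ≤ na := le_max_left _ _
  have hmaster : ∀ t ∈ Ici (0:ℝ), Real.log (Q t) ≤ K₀ - ΔR * t - β * I t := by
    intro t ht
    have h1 := hΦbound t ht
    have hlogPlb' := hlogPlb t ht
    have hPt1 : P t ≤ 1 := by
      have := hQpos t ht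
      have := hS1 t ht
      linarith
    have hPtpos := hPpos t ht
    clear hΦbound hlogPlb hΦanti hΦderiv hΨmono hΨderiv hΦkey hSdecay hPdecay hJle
      hImono hInn hQceq hXceq hIderiv hJderiv hQpos hPpos hS1 hP' hQ' hPc hQc hg1c hg2c
      hQcc hPcc hXcc hmem hmax
    clear_value I J γ CS CP a ΔR na β K₀ Qc Xc s' g1 g2
    have hcase : a * Real.log (P t) ≤ na * (l10*(CS/γ) + l21*I t - Real.log (P 0)) := by
      rcases le_or_gt 0 a with hc | hc
      · have hna0 : na = 0 := by simp only [hnadef]; simp [hc]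
        rw [hna0, zero_mul]
        exact mul_nonpos_of_nonneg_of_nonpos hc
          (Real.log_nonpos hPtpos.le hPt1)
      · have hna : na = -a := by
          simp only [hnadef]
          rw [max_eq_right (by linarith : (0:ℝ) ≤ -a)]
        have h3 := mul_le_mul_of_nonneg_left hlogPlb' hnann
        rw [hna]
        nlinarith [h3]
    have h2 : Real.log (Q t) ≤ (Real.log (Q 0) - a*Real.log (P 0)) - ΔR*t
        - l21^2 * I t + na * (l10*(CS/γ) + l21*I t - Real.log (P 0)) := by linarith
    have e : (Real.log (Q 0) - a*Real.log (P 0)) - ΔR*t - l21^2 * I t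
        + na * (l10*(CS/γ) + l21*I t - Real.log (P 0)) = K₀ - ΔR * t - β * I t := by
      simp only [hK₀def, hβdef]; ring
    linarith
  -- positivity of constants
  have hnale : na ≤ l21 := by
    apply max_le h21
    simp only [hadef]
    rw [neg_div', div_le_iff₀ hl10pos]  -- -(l20 - l21)/l10 ≤ l21
    nlinarith
  have hβnn : 0 ≤ β := by
    simp only [hβdef]
    nlinarith
  have hβpos : 0 < l21 → 0 < β := by
    intro hl21pos
    have hnalt : na < l21 := by
      apply max_lt hl21pos
      simp only [hadef]
      rw [neg_div', div_lt_iff₀ hl10pos]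
      nlinarith
    simp only [hβdef]
    nlinarith
  have hkey : 0 < ΔR ∨ 0 < β := by
    by_cases hl21 : l21 = 0
    · left
      rw [hl21] at h1in2
      have h1in2' : 1 < l10/l20 := by linarith [h1in2]
      have hl20lt : l20 < l10 := by
        have := (one_lt_div h20pos).mp h1in2'
        linarith
      simp only [hΔdef, hl21, hs'def]
      have : l20/l10 < 1 := (div_lt_one hl10pos).2 hl20lt
      linarith
    · right
      exact hβpos (lt_of_le_of_ne h21 (Ne.symm hl21))
    -- Q tends to 0
  have hQub : ∀ t ∈ Ici (0:ℝ), Q t ≤ Real.exp (K₀ - ΔR * t - β * I t) := by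
    intro t ht
    have h1 := hmaster t ht
    calc Q t = Real.exp (Real.log (Q t)) := (Real.exp_log (hQpos t ht)).symm
      _ ≤ _ := Real.exp_le_exp.2 h1
  have hQev0 : ∀ᶠ t in atTop, (0:ℝ) ≤ Q t :=
    (eventually_ge_atTop (0:ℝ)).mono (fun t ht => (hQpos t ht).le)
  have hQtend : Tendsto Q atTop (𝓝 0) := by
    rcases hkey with hΔpos | hβp
    · -- exponential decay
      have hub : ∀ᶠ t in atTop, Q t ≤ Real.exp (K₀ - ΔR * t) := by
        refine (eventually_ge_atTop (0:ℝ)).mono (fun t ht => ?_)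
        refine le_trans (hQub t ht) (Real.exp_le_exp.2 ?_)
        have h1 := mul_nonneg hβnn (hInn t ht)
        linarith
      have h1 : Tendsto (fun t : ℝ => ΔR * t) atTop atTop :=
        Tendsto.const_mul_atTop hΔpos tendsto_id
      have h2 : Tendsto (fun t : ℝ => K₀ - ΔR * t) atTop atBot := by
        have h3 := tendsto_atBot_add_const_left atTop K₀ (tendsto_neg_atTop_atBot.comp h1)
        refine h3.congr (fun t => ?_)
        simp [sub_eq_add_neg]
      exact squeeze_zero' hQev0 hub (Real.tendsto_exp_atBot.comp h2)
    · by_cases hIb : ∀ b : ℝ, ∃ t, b ≤ I t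
      · have hItop : Tendsto I atTop atTop := tendsto_atTop_atTop_of_monotone hImono hIb
        have hub : ∀ᶠ t in atTop, Q t ≤ Real.exp (K₀ - β * I t) := by
          refine (eventually_ge_atTop (0:ℝ)).mono (fun t ht => ?_)
          refine le_trans (hQub t ht) (Real.exp_le_exp.2 ?_)
          have h1 := mul_nonneg hΔnn ht
          linarith
        have h1 : Tendsto (fun t : ℝ => β * I t) atTop atTop :=
          Tendsto.const_mul_atTop hβp hItop
        have h2 : Tendsto (fun t : ℝ => K₀ - β * I t) atTop atBot := by
          have h3 := tendsto_atBot_add_const_left atTop K₀ (tendsto_neg_atTop_atBot.comp h1)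
          refine h3.congr (fun t => ?_)
          simp [sub_eq_add_neg]
        exact squeeze_zero' hQev0 hub (Real.tendsto_exp_atBot.comp h2)
      · push_neg at hIb
        obtain ⟨b, hb⟩ := hIb
        by_contra hno
        rw [Metric.tendsto_atTop] at hno
        push_neg at hno
        obtain ⟨η, hηpos, hfreq⟩ := hno
        have hfreq' : ∀ N : ℝ, ∃ t, N ≤ t ∧ 0 ≤ t ∧ η ≤ Q t := by
          intro N
          obtain ⟨n, hn, hd⟩ := hfreq (max N 0)
          refine ⟨n, le_trans (le_max_left _ _) hn, le_trans (le_max_right _ _) hn, ?_⟩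
          have hn0 : (0:ℝ) ≤ n := le_trans (le_max_right _ _) hn
          rwa [Real.dist_eq, sub_zero, abs_of_pos (hQpos n hn0)] at hd
        set M : ℝ := l20 + 1 + l21 with hMdef
        have hMnn : 0 ≤ M := by simp only [hMdef]; linarith
        have hψmono : MonotoneOn (fun t => Real.log (Q t) + M * t) (Ici 0) := by
          apply mono_Ici (f' := fun t => (Q t * g2 t)/(Q t) + M)
          · intro t ht
            have hlin : HasDerivAt (fun t : ℝ => M * t) M t := by
              simpa using (hasDerivAt_id t).const_mul M
            exact ((hQ' t ht).log (ne_of_gt (hQpos t ht))).add hlin.hasDerivWithinAt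
          · intro t ht
            rw [mul_div_cancel_left₀ _ (ne_of_gt (hQpos t ht))]
            simp only [hg2def, hMdef]
            have h1 := hS1 t ht
            have h2 := (hPpos t ht).le
            have h3 := (hQpos t ht).le
            nlinarith [mul_nonneg h20pos.le (by linarith : (0:ℝ) ≤ 1 - P t - Q t),
              mul_nonneg h21 h2]
        have hQlow : ∀ t₀, 0 ≤ t₀ → ∀ s ∈ Icc t₀ (t₀+1), Q t₀ * Real.exp (-M) ≤ Q s := by
          intro t₀ ht₀ s hs
          have hs0 : (0:ℝ) ≤ s := le_trans ht₀ hs.1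
          have h1 := hψmono ht₀ hs0 hs.1
          simp only at h1
          have h2 : Real.log (Q t₀) + (-M) ≤ Real.log (Q s) := by
            have h4 : M * (s - t₀) ≤ M * 1 :=
              mul_le_mul_of_nonneg_left (by linarith [hs.2]) hMnn
            nlinarith
          calc Q t₀ * Real.exp (-M) = Real.exp (Real.log (Q t₀) + (-M)) := by
                rw [Real.exp_add, Real.exp_log (hQpos t₀ ht₀)]
            _ ≤ Real.exp (Real.log (Q s)) := Real.exp_le_exp.2 h2
            _ = Q s := Real.exp_log (hQpos s hs0)
        have hstep : ∀ t₀, 0 ≤ t₀ → η ≤ Q t₀ → I t₀ + η * Real.exp (-M) ≤ I (t₀+1) := by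
          intro t₀ ht₀ hη
          have hadd : I (t₀+1) = I t₀ + ∫ x in t₀..(t₀+1), Qc x := by
            simp only [hIdef]
            rw [← intervalIntegral.integral_add_adjacent_intervals
              (hQcc.intervalIntegrable 0 t₀) (hQcc.intervalIntegrable t₀ (t₀+1))]
          have hconst : ∫ _x in t₀..(t₀+1), (η * Real.exp (-M)) = η * Real.exp (-M) := by
            rw [intervalIntegral.integral_const]
            simp
          have hlb : η * Real.exp (-M) ≤ ∫ x in t₀..(t₀+1), Qc x := by
            rw [← hconst]
            apply intervalIntegral.integral_mono_on (by linarith)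
              (continuous_const.intervalIntegrable _ _) (hQcc.intervalIntegrable _ _)
            intro x hx
            have hx0 : (0:ℝ) ≤ x := le_trans ht₀ hx.1
            rw [hQceq x hx0]
            have h1 := hQlow t₀ ht₀ x hx
            have h2 : η * Real.exp (-M) ≤ Q t₀ * Real.exp (-M) :=
              mul_le_mul_of_nonneg_right hη (Real.exp_pos _).le
            linarith
          linarith
        choose τ hτ₁ hτ₂ hτ₃ using hfreq'
        set seq : ℕ → ℝ := fun n => Nat.rec (τ 0) (fun _ un => τ (un + 1)) n with hseqdef
        have hseqpos : ∀ n, 0 ≤ seq n := by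
          intro n; cases n with
          | zero => exact hτ₂ 0
          | succ k => exact hτ₂ _
        have hseqQ : ∀ n, η ≤ Q (seq n) := by
          intro n; cases n with
          | zero => exact hτ₃ 0
          | succ k => exact hτ₃ _
        have hseqstep : ∀ n, seq n + 1 ≤ seq (n+1) := fun n => hτ₁ (seq n + 1)
        have hind : ∀ n : ℕ, ((n:ℝ)+1) * (η * Real.exp (-M)) ≤ I (seq n + 1) := by
          intro n
          induction n with
          | zero =>
            have h1 := hstep (seq 0) (hseqpos 0) (hseqQ 0)
            have h2 : I 0 ≤ I (seq 0) := hImono (hseqpos 0)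
            rw [hI0] at h2
            push_cast
            linarith
          | succ k ih =>
            have h1 := hstep (seq (k+1)) (hseqpos (k+1)) (hseqQ (k+1))
            have h2 : I (seq k + 1) ≤ I (seq (k+1)) := hImono (hseqstep k)
            push_cast
            push_cast at ih
            linarith
        have hc : 0 < η * Real.exp (-M) := mul_pos hηpos (Real.exp_pos _)
        obtain ⟨n, hn⟩ := exists_nat_gt (b / (η * Real.exp (-M)))
        have h1 : b < (n:ℝ) * (η * Real.exp (-M)) := (div_lt_iff₀ hc).mp hn
        have h2 := hind n
        have h3 := hb (seq n + 1)
        nlinarith [hc.le, (by exact_mod_cast Nat.cast_nonneg n : (0:ℝ) ≤ (n:ℝ))]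
  refine ⟨?_, hQtend⟩
  -- P tends to s'
  clear hmaster hQub hQev0 hΦderiv hΦanti hΦbound hΨderiv hΨmono hΦkey hβpos hβnn
    hnale hnann hkey hlogPlb hIderiv hJderiv hImono hInn hI0 hJ0 hJle hQceq hXceq
    hQcc hPcc hXcc hSdecay hg1c hg2c
  clear hΦdef hΦ'def hΨdef hΨ'def hK₀def hβdef hnadef hadef hΔdef hΔnn hIdef hJdef
    hQcdef hXcdef hCSdef hCSnn hmax hmem hl21fac hDR0
  clear Φ Φ' Ψ Ψ' K₀ β na a ΔR I J Qc Xc CS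
  clear_value s' γ CP
  rw [Metric.tendsto_atTop]
  intro ε hε
  have hε3 : 0 < ε/3 := by linarith
  set ε' : ℝ := min (ε/3) (s'/2) with hε'def
  have hε'pos : 0 < ε' := lt_min hε3 (half_pos hs'pos)
  have hε'le : ε' ≤ ε/3 := min_le_left _ _
  have hε'le2 : ε' ≤ s'/2 := min_le_right _ _
  have hε'lt : ε' < s' := lt_of_le_of_lt hε'le2 (half_lt_self hs'pos)
  clear_value ε'
  have hl1021 : 0 < l10 + l21 := by linarith
  set εq : ℝ := l10 * ε' / (l10 + l21) with hεqdef
  have hεqpos : 0 < εq := by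
    rw [hεqdef]; exact div_pos (mul_pos hl10pos hε'pos) hl1021
  have hεqid : (l10 + l21) * εq = l10 * ε' := by
    rw [hεqdef]; field_simp
  clear_value εq
  -- upper bound tail
  have hCPtend : Tendsto (fun t => CP * Real.exp (-γ*t)) atTop (𝓝 0) := by
    have h1 : Tendsto (fun t : ℝ => γ * t) atTop atTop :=
      Tendsto.const_mul_atTop hγpos tendsto_id
    have h2 : Tendsto (fun t : ℝ => -γ*t) atTop atBot := by
      have h3 := tendsto_neg_atTop_atBot.comp h1
      refine h3.congr (fun t => ?_)
      show -(γ * t) = -γ * t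
      ring
    have h4 := (Real.tendsto_exp_atBot.comp h2).const_mul CP
    simpa using h4
  have hup_ev : ∀ᶠ t in atTop, CP * Real.exp (-γ*t) < ε' :=
    hCPtend.eventually_lt_const hε'pos
  -- small Q tail
  have hQsm_ev : ∀ᶠ t in atTop, Q t < εq := hQtend.eventually_lt_const hεqpos
  obtain ⟨T₀', hT₀'⟩ := eventually_atTop.1 (hQsm_ev.and (eventually_ge_atTop (0:ℝ)))
  set T₀ : ℝ := max T₀' 0 with hT₀def
  have hT₀0 : (0:ℝ) ≤ T₀ := le_max_right _ _
  have hQsm : ∀ t ∈ Ici T₀, Q t < εq := by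
    intro t ht
    exact (hT₀' t (le_trans (le_max_left _ _) ht)).1
  have hIciT₀ : Ici T₀ ⊆ Ici (0:ℝ) := Ici_subset_Ici.2 hT₀0
  clear_value T₀
  set κ : ℝ := s' - ε' with hκdef
  have hκpos : 0 < κ := by rw [hκdef]; exact sub_pos.2 hε'lt
  clear_value κ
  have hPT₀pos : 0 < P T₀ := hPpos T₀ hT₀0
  set m : ℝ := min (P T₀) κ / 2 with hmdef
  have hminpos : 0 < min (P T₀) κ := lt_min hPT₀pos hκpos
  have hmpos : 0 < m := by rw [hmdef]; exact half_pos hminpos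
  have hmκ : m ≤ κ/2 := by
    rw [hmdef]
    have h1 := min_le_right (P T₀) κ
    linarith
  have hmP : m < P T₀ := by
    rw [hmdef]
    have h1 := min_le_left (P T₀) κ
    linarith
  clear_value m
  -- g1 lower bound on the tail
  have hg1lb : ∀ t ∈ Ici T₀, l10 * (κ - P t) ≤ g1 t := by
    intro t ht
    have ht0 := hIciT₀ ht
    have h1 := hQsm t ht
    have h2 : (l10 + l21) * Q t < l10 * ε' := by
      calc (l10 + l21) * Q t < (l10 + l21) * εq := mul_lt_mul_of_pos_left h1 hl1021
        _ = l10 * ε' := hεqid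
    have hid : l10 * s' = l10 - 1 := by rw [hs'def]; field_simp
    have hq0 := (hQpos t ht0).le
    have e1 : g1 t - l10 * (κ - P t) = l10 * ε' - (l10 + l21) * Q t - (l10 * s' - (l10 - 1)) := by
      simp only [hg1def, hκdef]
      ring
    linarith [e1]
  -- barrier (a): P stays above m on the tail
  have hPm : ∀ t ∈ Ici T₀, m ≤ P t := by
    have hcontact : ∀ t ∈ Ici T₀, (fun t => -P t) t = (fun _ : ℝ => -m) t
        → -(P t * g1 t) < (fun _ : ℝ => (0:ℝ)) t := by
      intro t ht hc
      have hc' : -P t = -m := hc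
      have hPt : P t = m := neg_injective hc'
      have h1 := hg1lb t ht
      have h2 : l10 * (κ/2) ≤ l10 * (κ - P t) := by
        apply mul_le_mul_of_nonneg_left _ hl10pos.le
        rw [hPt]
        linarith
      have h25 : 0 < l10 * (κ/2) := mul_pos hl10pos (half_pos hκpos)
      have h3 : 0 < g1 t := lt_of_lt_of_le h25 (le_trans h2 h1)
      have h4 : 0 < P t * g1 t := by
        rw [hPt]; exact mul_pos hmpos h3
      exact neg_lt_zero.2 h4
    have hbar := barrier_Ici (a := T₀) (f := fun t => -P t)
      (f' := fun t => -(P t * g1 t)) (B := fun _ => -m) (B' := fun _ => (0:ℝ))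
      (fun t ht => ((hP' t (hIciT₀ ht)).mono hIciT₀).neg)
      (fun t _ => (hasDerivAt_const t (-m)).hasDerivWithinAt)
      (neg_le_neg hmP.le) hcontact
    intro t ht
    exact le_of_neg_le_neg (hbar t ht)
  -- barrier (b): P approaches κ from below
  set c : ℝ := l10 * m / 2 with hcdef
  have hcpos : 0 < c := by rw [hcdef]; exact half_pos (mul_pos hl10pos hmpos)
  clear_value c
  have hPlow : ∀ t ∈ Ici T₀, κ - P t ≤ (κ+1) * Real.exp (-c*(t - T₀)) := by
    have hcontact : ∀ t ∈ Ici T₀,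
        (fun t => κ - P t) t = (fun t => (κ+1) * Real.exp (-c*(t - T₀))) t
        → -(P t * g1 t) < (fun t => -(c * ((κ+1) * Real.exp (-c*(t - T₀))))) t := by
      intro t ht hc2
      have hc2' : κ - P t = (κ+1) * Real.exp (-c*(t - T₀)) := hc2
      set E : ℝ := (κ+1) * Real.exp (-c*(t - T₀)) with hEdef
      have hEpos : 0 < E := by
        rw [hEdef]; exact mul_pos (add_pos hκpos one_pos) (Real.exp_pos _)
      have hPt : P t = κ - E := by linarith
      have h1 := hg1lb t ht
      have h1' : l10 * E ≤ g1 t := by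
        rw [hPt] at h1
        calc l10 * E = l10 * (κ - (κ - E)) := by ring
          _ ≤ g1 t := h1
      have h3 := hPm t ht
      have h4 : m * (l10 * E) ≤ P t * g1 t := by
        exact mul_le_mul h3 h1' (mul_pos hl10pos hEpos).le (lt_of_lt_of_le hmpos h3).le
      have h5 : c * E < m * (l10 * E) := by
        rw [hcdef]
        nlinarith [mul_pos (mul_pos hl10pos hmpos) hEpos]
      exact neg_lt_neg (lt_of_lt_of_le h5 h4)
    apply barrier_Ici (a := T₀) (f := fun t => κ - P t)
      (f' := fun t => -(P t * g1 t))
      (B' := fun t => -(c * ((κ+1) * Real.exp (-c*(t - T₀)))))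
      ?_ ?_ ?_ hcontact
    · intro t ht
      have h1 := ((hP' t (hIciT₀ ht)).mono hIciT₀).neg
      have h2 : HasDerivWithinAt (fun t => κ - P t)
          (-(P t * (l10 * (1 - P t - Q t) - 1 - l21 * Q t))) (Ici T₀) t := by
        simpa [sub_eq_add_neg] using h1.const_add κ
      exact h2
    · intro t _
      have h1 : HasDerivAt (fun t : ℝ => -c*(t - T₀)) (-c) t := by
        simpa using ((hasDerivAt_id t).sub_const T₀).const_mul (-c)
      have h2 := h1.exp.const_mul (κ+1)
      have h3 : HasDerivAt (fun t => (κ+1) * Real.exp (-c*(t - T₀)))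
          (-(c * ((κ+1) * Real.exp (-c*(t - T₀))))) t := by
        refine h2.congr_deriv ?_; ring
      exact h3.hasDerivWithinAt
    · show κ - P T₀ ≤ (κ+1) * Real.exp (-c*(T₀ - T₀))
      have h1 : Real.exp (-c*(T₀ - T₀)) = 1 := by
        rw [sub_self, mul_zero, Real.exp_zero]
      rw [h1]
      linarith
  -- final tail
  have hdecay2 : Tendsto (fun t => (κ+1) * Real.exp (-c*(t - T₀))) atTop (𝓝 0) := by
    have h1 : Tendsto (fun t : ℝ => c * (t - T₀)) atTop atTop := by
      apply Tendsto.const_mul_atTop hcpos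
      exact tendsto_atTop_add_const_right _ (-T₀) tendsto_id |>.congr (fun t => by simp only [id_eq]; ring)
    have h2 : Tendsto (fun t : ℝ => -c*(t - T₀)) atTop atBot := by
      have h3 := tendsto_neg_atTop_atBot.comp h1
      refine h3.congr (fun t => ?_)
      show -(c * (t - T₀)) = -c * (t - T₀)
      ring
    have h4 := (Real.tendsto_exp_atBot.comp h2).const_mul (κ+1)
    simpa using h4
  have hlow_ev : ∀ᶠ t in atTop, (κ+1) * Real.exp (-c*(t - T₀)) < ε' :=
    hdecay2.eventually_lt_const hε'pos
  obtain ⟨T₁, hT₁⟩ := eventually_atTop.1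
    ((hup_ev.and hlow_ev).and (eventually_ge_atTop (max T₀ 0)))
  refine ⟨T₁, fun t ht => ?_⟩
  obtain ⟨⟨hu1, hu2⟩, hu3⟩ := hT₁ t ht
  have ht0 : (0:ℝ) ≤ t := le_trans (le_max_right _ _) hu3
  have htT₀ : T₀ ≤ t := le_trans (le_max_left _ _) hu3
  have hupper : P t - s' < ε' := lt_of_le_of_lt (hPdecay t ht0) hu1
  have hlower : s' - P t < 2*ε' := by
    have h1 := hPlow t htT₀
    have h2 : κ - P t < ε' := lt_of_le_of_lt h1 hu2
    rw [hκdef] at h2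
    linarith
  rw [Real.dist_eq, abs_lt]
  constructor
  · linarith
  · linarith
/-- 1s win: δ = 0, λ10 > 1, (2s invade 1s) fails and (1s invade 2s) holds. -/
theorem ones_win_globally_stable
    (l10 l20 l21 δ : ℝ) (h10 : 0 ≤ l10) (h20 : 0 ≤ l20) (h21 : 0 ≤ l21) (hδ : 0 ≤ δ)
    (hδ0 : δ = 0) (h10gt : 1 < l10)
    (h2in1fail : ¬ (l20 / l10 + l21 * (1 - 1 / l10) > 1 + δ))
    (h1in2 : l10 / l20 - l21 * (1 - 1 / l20) > 1) :
    ∀ u : ℝ → ℝ × ℝ, IsSolution l10 l20 l21 δ u → u 0 ∈ lambdaPlus δ →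
      Tendsto u atTop (𝓝 ((1 - 1 / l10, 0) : ℝ × ℝ)) := by
  subst hδ0
  intro u hu hu0
  set P : ℝ → ℝ := fun t => (u t).1 with hPdef
  set Q : ℝ → ℝ := fun t => (u t).2 with hQdef
  have hP' : ∀ t ∈ Ici (0:ℝ), HasDerivWithinAt P
      (P t * (l10 * (1 - P t - Q t) - 1 - l21 * Q t)) (Ici 0) t := by
    intro t ht
    have h1 := (hasFDerivAt_fst (𝕜 := ℝ)).comp_hasDerivWithinAt t (hu t ht)
    refine h1.congr_deriv ?_
    show (meanField l10 l20 l21 0 (u t)).1 = _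
    simp only [meanField, hPdef, hQdef]
    ring
  have hQ' : ∀ t ∈ Ici (0:ℝ), HasDerivWithinAt Q
      (Q t * (l20 * (1 - P t - Q t) - 1 + l21 * P t)) (Ici 0) t := by
    intro t ht
    have h1 := (hasFDerivAt_snd (𝕜 := ℝ)).comp_hasDerivWithinAt t (hu t ht)
    refine h1.congr_deriv ?_
    show (meanField l10 l20 l21 0 (u t)).2 = _
    simp only [meanField, hPdef, hQdef]
    ring
  obtain ⟨⟨hr1, hr2, hr3⟩, hq0, himp⟩ := hu0
  have hP0 : 0 < P 0 := himp rfl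
  have hDR : l20 / l10 + l21 * (1 - 1 / l10) ≤ 1 := by
    push_neg at h2in1fail
    linarith
  have h20pos : 0 < l20 := by
    rcases eq_or_lt_of_le h20 with h | h
    · exfalso
      rw [← h] at h1in2
      simp only [div_zero, zero_sub, gt_iff_lt] at h1in2
      have : l21 * (1 - 1/(0:ℝ)) = l21 := by norm_num
      nlinarith [h1in2]
    · exact h
  obtain ⟨hPt, hQt⟩ := ones_win_core l10 l20 l21 h21 h10gt h20pos hDR h1in2
    P Q hP' hQ' hP0 hq0 hr3
  have hueq : u = fun t => (P t, Q t) := by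
    funext t
    simp [hPdef, hQdef]
  rw [hueq]
  exact hPt.prodMk_nhds hQt
end

section
/- The region Λ is forward invariant for the mean-field system: every solution u : [0,∞) → ℝ² of u' = F(u) with u(0) ∈ Λ satisfies u(t) ∈ Λ for all t ≥ 0. -/
open Filter Topology Set

/-- Right-slope limit of `max (φ ·) 0` along `𝓝[>] x` for a function with a right derivative. -/
lemma tendsto_slope_max_aux {φ : ℝ → ℝ} {m x : ℝ}
    (h : HasDerivWithinAt φ m (Set.Ici x) x) :
    Tendsto (fun z => (z - x)⁻¹ * (max (φ z) 0 - max (φ x) 0)) (𝓝[>] x)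
      (𝓝 (if 0 < φ x then m else if φ x < 0 then 0 else max m 0)) := by
  have hs : Tendsto (slope φ x) (𝓝[>] x) (𝓝 m) := by
    have := hasDerivWithinAt_iff_tendsto_slope.mp h
    rwa [Set.Ici_sdiff_left] at this
  have hc : Tendsto φ (𝓝[>] x) (𝓝 (φ x)) :=
    h.continuousWithinAt.mono Set.Ioi_subset_Ici_self
  have hmem : ∀ᶠ z in 𝓝[>] x, x < z := eventually_mem_nhdsWithin
  rcases lt_trichotomy (φ x) 0 with hneg | hzero | hpos
  · rw [if_neg (by linarith), if_pos hneg]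
    have hev : ∀ᶠ z in 𝓝[>] x, φ z < 0 := hc.eventually (eventually_lt_nhds hneg)
    refine tendsto_const_nhds.congr' ?_
    filter_upwards [hev] with z hz
    rw [max_eq_right hz.le, max_eq_right hneg.le]
    ring
  · rw [if_neg (by simp [hzero]), if_neg (by simp [hzero])]
    refine (hs.max tendsto_const_nhds).congr' ?_
    filter_upwards [hmem] with z hz
    have hzx : (0:ℝ) < z - x := sub_pos.mpr hz
    rw [hzero, max_self, sub_zero, slope_def_field, hzero, sub_zero, div_eq_inv_mul]
    rcases le_total (φ z) 0 with h1 | h1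
    · rw [max_eq_right h1, max_eq_right (by nlinarith [inv_pos.mpr hzx])]
      nlinarith [inv_pos.mpr hzx]
    · rw [max_eq_left h1, max_eq_left (by positivity)]
  · rw [if_pos hpos]
    have hev : ∀ᶠ z in 𝓝[>] x, 0 < φ z := hc.eventually (eventually_gt_nhds hpos)
    refine hs.congr' ?_
    filter_upwards [hev] with z hz
    rw [max_eq_left hz.le, max_eq_left hpos.le, slope_def_field, div_eq_inv_mul]

lemma lambdaRegion_bnd1 (l10 l20 l21 δ M a b : ℝ) (h10 : 0 ≤ l10) (h20 : 0 ≤ l20)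
    (h21 : 0 ≤ l21) (hδ : 0 ≤ δ) (hM1 : 1 ≤ M) (ha : -M ≤ a) (ha' : a ≤ M)
    (hb : -M ≤ b) (hb' : b ≤ M) (hneg : a < 0) :
    -(l10*a*(1-a-b) - a + δ*b - l21*a*b) ≤
      (l10+l20+l21+δ+1)*(2*M+2) * ((-a) + max (-b) 0 + max (a+b-1) 0) := by
  set B := max (-b) 0 with hB
  have hB1 : -b ≤ B := le_max_left _ _
  have hB0 : 0 ≤ B := le_max_right _ _
  have hBM : B ≤ M := max_le (by linarith) (by linarith)
  have hC0 : (0:ℝ) ≤ max (a+b-1) 0 := le_max_right _ _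
  have hA0 : (0:ℝ) ≤ -a := by linarith
  have step : -(l10*a*(1-a-b) - a + δ*b - l21*a*b) ≤
      l10*(1+2*M)*(-a) + δ*B + l21*M*(-a) := by
    nlinarith [mul_nonneg (mul_nonneg h10 hA0) (by linarith : (0:ℝ) ≤ 1+2*M-(1-a-b)),
      mul_le_mul_of_nonneg_left hB1 hδ,
      mul_nonneg (mul_nonneg h21 hA0) (by linarith : (0:ℝ) ≤ M - B),
      mul_nonneg (mul_nonneg h21 hA0) (by linarith : (0:ℝ) ≤ B + b)]
  have lin : l10*(1+2*M)*(-a) + δ*B + l21*M*(-a) ≤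
      (l10+l20+l21+δ+1)*(2*M+2) * ((-a) + B + max (a+b-1) 0) := by
    nlinarith [mul_nonneg (by nlinarith :
        (0:ℝ) ≤ (l10+l20+l21+δ+1)*(2*M+2) - l10*(1+2*M) - l21*M) hA0,
      mul_nonneg (by nlinarith : (0:ℝ) ≤ (l10+l20+l21+δ+1)*(2*M+2) - δ) hB0,
      mul_nonneg (by nlinarith : (0:ℝ) ≤ (l10+l20+l21+δ+1)*(2*M+2)) hC0]
  linarith

lemma lambdaRegion_bnd2 (l10 l20 l21 δ M a b : ℝ) (h10 : 0 ≤ l10) (h20 : 0 ≤ l20)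
    (h21 : 0 ≤ l21) (hδ : 0 ≤ δ) (hM1 : 1 ≤ M) (ha : -M ≤ a) (ha' : a ≤ M)
    (hb : -M ≤ b) (hb' : b ≤ M) (hneg : b < 0) :
    -(l20*b*(1-a-b) - b - δ*b + l21*a*b) ≤
      (l10+l20+l21+δ+1)*(2*M+2) * (max (-a) 0 + (-b) + max (a+b-1) 0) := by
  have hA0 : (0:ℝ) ≤ max (-a) 0 := le_max_right _ _
  have hC0 : (0:ℝ) ≤ max (a+b-1) 0 := le_max_right _ _
  have hB0 : (0:ℝ) ≤ -b := by linarith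
  have step : -(l20*b*(1-a-b) - b - δ*b + l21*a*b) ≤
      l20*(1+2*M)*(-b) + l21*M*(-b) := by
    nlinarith [mul_nonneg (mul_nonneg h20 hB0) (by linarith : (0:ℝ) ≤ 1+2*M-(1-a-b)),
      mul_nonneg (mul_nonneg h21 hB0) (by linarith : (0:ℝ) ≤ M - a),
      mul_nonneg hδ hB0]
  have lin : l20*(1+2*M)*(-b) + l21*M*(-b) ≤
      (l10+l20+l21+δ+1)*(2*M+2) * (max (-a) 0 + (-b) + max (a+b-1) 0) := by
    nlinarith [mul_nonneg (by nlinarith :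
        (0:ℝ) ≤ (l10+l20+l21+δ+1)*(2*M+2) - l20*(1+2*M) - l21*M) hB0,
      mul_nonneg (by nlinarith : (0:ℝ) ≤ (l10+l20+l21+δ+1)*(2*M+2)) hA0,
      mul_nonneg (by nlinarith : (0:ℝ) ≤ (l10+l20+l21+δ+1)*(2*M+2)) hC0]
  linarith

lemma lambdaRegion_bnd3 (l10 l20 l21 δ M a b : ℝ) (h10 : 0 ≤ l10) (h20 : 0 ≤ l20)
    (h21 : 0 ≤ l21) (hδ : 0 ≤ δ) (hM1 : 1 ≤ M) (ha : -M ≤ a) (ha' : a ≤ M)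
    (hb : -M ≤ b) (hb' : b ≤ M) (hpos : 0 < a + b - 1) :
    (l10*a*(1-a-b) - a + δ*b - l21*a*b) + (l20*b*(1-a-b) - b - δ*b + l21*a*b) ≤
      (l10+l20+l21+δ+1)*(2*M+2) * (max (-a) 0 + max (-b) 0 + (a+b-1)) := by
  have hA0 : (0:ℝ) ≤ max (-a) 0 := le_max_right _ _
  have hB0 : (0:ℝ) ≤ max (-b) 0 := le_max_right _ _
  have hC0 : (0:ℝ) ≤ a + b - 1 := hpos.le
  have step : (l10*a*(1-a-b) - a + δ*b - l21*a*b) + (l20*b*(1-a-b) - b - δ*b + l21*a*b) ≤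
      (l10+l20)*M*(a+b-1) := by
    nlinarith [mul_nonneg (mul_nonneg h10 (by linarith : (0:ℝ) ≤ M + a)) hC0,
      mul_nonneg (mul_nonneg h20 (by linarith : (0:ℝ) ≤ M + b)) hC0]
  have lin : (l10+l20)*M*(a+b-1) ≤
      (l10+l20+l21+δ+1)*(2*M+2) * (max (-a) 0 + max (-b) 0 + (a+b-1)) := by
    nlinarith [mul_nonneg (by nlinarith :
        (0:ℝ) ≤ (l10+l20+l21+δ+1)*(2*M+2) - (l10+l20)*M) hC0,
      mul_nonneg (by nlinarith : (0:ℝ) ≤ (l10+l20+l21+δ+1)*(2*M+2)) hA0,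
      mul_nonneg (by nlinarith : (0:ℝ) ≤ (l10+l20+l21+δ+1)*(2*M+2)) hB0]
  linarith

set_option maxHeartbeats 1000000 in
/-- The region Λ is forward invariant for the mean-field system. -/
theorem lambdaRegion_forward_invariant
    (l10 l20 l21 δ : ℝ) (h10 : 0 ≤ l10) (h20 : 0 ≤ l20) (h21 : 0 ≤ l21) (hδ : 0 ≤ δ)
    (u : ℝ → ℝ × ℝ) (hu : IsSolution l10 l20 l21 δ u)
    (h0 : u 0 ∈ lambdaRegion) :
    ∀ t : ℝ, 0 ≤ t → u t ∈ lambdaRegion := by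
  intro T hT
  obtain ⟨ha0, hb0, hs0⟩ := h0
  have hucont : ContinuousOn u (Icc 0 T) := fun x hx =>
    ((hu x hx.1).continuousWithinAt).mono (fun y hy => hy.1)
  obtain ⟨M0, hM0⟩ := isCompact_Icc.exists_bound_of_continuousOn hucont
  set M : ℝ := max M0 1 with hMdef
  have hM1 : (1:ℝ) ≤ M := le_max_right _ _
  have hb1 : ∀ x ∈ Icc (0:ℝ) T, |(u x).1| ≤ M ∧ |(u x).2| ≤ M := by
    intro x hx
    have h1 : ‖(u x).1‖ ≤ M := (norm_fst_le (u x)).trans ((hM0 x hx).trans (le_max_left M0 1))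
    have h2 : ‖(u x).2‖ ≤ M := (norm_snd_le (u x)).trans ((hM0 x hx).trans (le_max_left M0 1))
    exact ⟨by simpa [Real.norm_eq_abs] using h1, by simpa [Real.norm_eq_abs] using h2⟩
  set K : ℝ := 3 * ((l10 + l20 + l21 + δ + 1) * (2*M + 2)) with hKdef
  have hK1nn : (0:ℝ) ≤ (l10 + l20 + l21 + δ + 1) * (2*M + 2) := by positivity
  set F : ℝ → ℝ × ℝ := fun x => meanField l10 l20 l21 δ (u x) with hFdef
  set g : ℝ → ℝ := fun z =>
    max (-(u z).1) 0 + max (-(u z).2) 0 + max ((u z).1 + (u z).2 - 1) 0 with hgdef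
  set d1 : ℝ → ℝ := fun x =>
    if 0 < -(u x).1 then -(F x).1 else if -(u x).1 < 0 then 0 else max (-(F x).1) 0 with hd1def
  set d2 : ℝ → ℝ := fun x =>
    if 0 < -(u x).2 then -(F x).2 else if -(u x).2 < 0 then 0 else max (-(F x).2) 0 with hd2def
  set d3 : ℝ → ℝ := fun x =>
    if 0 < (u x).1 + (u x).2 - 1 then (F x).1 + (F x).2
    else if (u x).1 + (u x).2 - 1 < 0 then 0 else max ((F x).1 + (F x).2) 0 with hd3def
  set g' : ℝ → ℝ := fun x => d1 x + d2 x + d3 x with hg'def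
  have hcomp : ∀ x ∈ Ico (0:ℝ) T,
      HasDerivWithinAt (fun z => (u z).1) ((F x).1) (Ici x) x ∧
      HasDerivWithinAt (fun z => (u z).2) ((F x).2) (Ici x) x := by
    intro x hx
    have hU : HasDerivWithinAt u (F x) (Ici x) x :=
      (hu x hx.1).mono (Ici_subset_Ici.mpr hx.1)
    constructor
    · have := (ContinuousLinearMap.fst ℝ ℝ ℝ).hasFDerivAt.comp_hasDerivWithinAt x hU
      exact this
    · have := (ContinuousLinearMap.snd ℝ ℝ ℝ).hasFDerivAt.comp_hasDerivWithinAt x hU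
      exact this
  have hf' : ∀ x ∈ Ico (0:ℝ) T, ∀ r, g' x < r →
      ∃ᶠ z in 𝓝[>] x, (z - x)⁻¹ * (g z - g x) < r := by
    intro x hx r hr
    obtain ⟨h1, h2⟩ := hcomp x hx
    have T1 := tendsto_slope_max_aux (φ := fun z => -(u z).1) (m := -(F x).1) h1.neg
    have T2 := tendsto_slope_max_aux (φ := fun z => -(u z).2) (m := -(F x).2) h2.neg
    have T3 := tendsto_slope_max_aux (φ := fun z => (u z).1 + (u z).2 - 1)
      (m := (F x).1 + (F x).2) ((h1.add h2).sub_const 1)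
    have Tsum : Tendsto (fun z => (z - x)⁻¹ * (g z - g x)) (𝓝[>] x) (𝓝 (g' x)) := by
      have := (T1.add T2).add T3
      refine this.congr (fun z => ?_)
      simp only [hgdef]
      ring
    exact (Tsum.eventually (gt_mem_nhds hr)).frequently
  have bound : ∀ x ∈ Ico (0:ℝ) T, g' x ≤ K * g x + 0 := by
    intro x hx
    obtain ⟨hba, hbb⟩ := hb1 x ⟨hx.1, hx.2.le⟩
    set a := (u x).1 with hadef
    set b := (u x).2 with hbdef
    obtain ⟨haM, haM'⟩ := abs_le.mp hba
    obtain ⟨hbM, hbM'⟩ := abs_le.mp hbb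
    have hF1 : (F x).1 = l10 * a * (1 - a - b) - a + δ * b - l21 * a * b := rfl
    have hF2 : (F x).2 = l20 * b * (1 - a - b) - b - δ * b + l21 * a * b := rfl
    have hgx : g x = max (-a) 0 + max (-b) 0 + max (a + b - 1) 0 := rfl
    have hA1 : -a ≤ max (-a) 0 := le_max_left _ _
    have hA0 : (0:ℝ) ≤ max (-a) 0 := le_max_right _ _
    have hB1 : -b ≤ max (-b) 0 := le_max_left _ _
    have hB0 : (0:ℝ) ≤ max (-b) 0 := le_max_right _ _
    have hC0 : (0:ℝ) ≤ max (a + b - 1) 0 := le_max_right _ _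
    have hgnn : 0 ≤ g x := by rw [hgx]; positivity
    have hd1b : d1 x ≤ (l10 + l20 + l21 + δ + 1) * (2*M + 2) * g x := by
      simp only [hd1def]
      split_ifs with hc1 hc2
      · rw [hF1, hgx, max_eq_left (by linarith : (0:ℝ) ≤ -a)]
        exact lambdaRegion_bnd1 l10 l20 l21 δ M a b h10 h20 h21 hδ hM1 haM haM' hbM hbM'
          (by linarith)
      · exact mul_nonneg hK1nn hgnn
      · have ha0' : a = 0 := by
          have := not_lt.mp hc1; have := not_lt.mp hc2; linarith
        have hval : -(F x).1 = δ * (-b) := by rw [hF1, ha0']; ring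
        rw [hval, hgx]
        refine max_le ?_ (mul_nonneg hK1nn hgnn)
        nlinarith [mul_le_mul_of_nonneg_left hB1 hδ,
          mul_nonneg (by nlinarith : (0:ℝ) ≤ (l10+l20+l21+δ+1)*(2*M+2) - δ) hB0,
          mul_nonneg hK1nn hA0, mul_nonneg hK1nn hC0]
    have hd2b : d2 x ≤ (l10 + l20 + l21 + δ + 1) * (2*M + 2) * g x := by
      simp only [hd2def]
      split_ifs with hc1 hc2
      · rw [hF2, hgx, max_eq_left (a := -b) (by linarith : (0:ℝ) ≤ -b)]
        exact lambdaRegion_bnd2 l10 l20 l21 δ M a b h10 h20 h21 hδ hM1 haM haM' hbM hbM'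
          (by linarith)
      · exact mul_nonneg hK1nn hgnn
      · have hb0' : b = 0 := by
          have := not_lt.mp hc1; have := not_lt.mp hc2; linarith
        have hval : -(F x).2 = 0 := by rw [hF2, hb0']; ring
        rw [hval, max_self]
        exact mul_nonneg hK1nn hgnn
    have hd3b : d3 x ≤ (l10 + l20 + l21 + δ + 1) * (2*M + 2) * g x := by
      simp only [hd3def]
      split_ifs with hc1 hc2
      · rw [hF1, hF2, hgx, max_eq_left (a := a + b - 1) (by linarith : (0:ℝ) ≤ a + b - 1)]
        exact lambdaRegion_bnd3 l10 l20 l21 δ M a b h10 h20 h21 hδ hM1 haM haM' hbM hbM' hc1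
      · exact mul_nonneg hK1nn hgnn
      · have hs1 : a + b = 1 := by
          have := not_lt.mp hc1; have := not_lt.mp hc2; linarith
        have hval : (F x).1 + (F x).2 = (l10 * a + l20 * b) * (1 - a - b) - (a + b) := by
          rw [hF1, hF2]; ring
        have h2' : (1:ℝ) - a - b = 0 := by linarith
        rw [hval, h2', max_eq_right (by nlinarith)]
        exact mul_nonneg hK1nn hgnn
    have hgeq : g' x = d1 x + d2 x + d3 x := rfl
    rw [hgeq, hKdef]
    linarith
  have hcontg : ContinuousOn g (Icc 0 T) := by
    apply ContinuousOn.add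
    apply ContinuousOn.add
    · exact (hucont.fst.neg).sup continuousOn_const
    · exact (hucont.snd.neg).sup continuousOn_const
    · exact ((hucont.fst.add hucont.snd).sub continuousOn_const).sup continuousOn_const
  have ha : g 0 ≤ 0 := by
    have hg0 : g 0 = max (-(u 0).1) 0 + max (-(u 0).2) 0 + max ((u 0).1 + (u 0).2 - 1) 0 := rfl
    rw [hg0, max_eq_right (by linarith), max_eq_right (by linarith),
      max_eq_right (by linarith)]
    norm_num
  have hgron := le_gronwallBound_of_liminf_deriv_right_le (f := g) (f' := g')
    (δ := 0) (K := K) (ε := 0) (a := 0) (b := T) hcontg hf' ha bound T ⟨hT, le_refl T⟩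
  rw [gronwallBound_ε0] at hgron
  simp only [zero_mul] at hgron
  have e1 : -(u T).1 ≤ max (-(u T).1) 0 := le_max_left _ _
  have e1' : 0 ≤ max (-(u T).1) 0 := le_max_right _ _
  have e2 : -(u T).2 ≤ max (-(u T).2) 0 := le_max_left _ _
  have e2' : 0 ≤ max (-(u T).2) 0 := le_max_right _ _
  have e3 : (u T).1 + (u T).2 - 1 ≤ max ((u T).1 + (u T).2 - 1) 0 := le_max_left _ _
  have e3' : 0 ≤ max ((u T).1 + (u T).2 - 1) 0 := le_max_right _ _
  have hgT : g T = max (-(u T).1) 0 + max (-(u T).2) 0 + max ((u T).1 + (u T).2 - 1) 0 := rfl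
  rw [hgT] at hgron
  exact ⟨by linarith, by linarith, by linarith⟩
end

section
/- A point p on the topological boundary of Λ satisfies F(p) = (0,0) if and only if p = (0,0), or λ10 > 1 and p = (1 − 1/λ10, 0), or δ = 0 and λ20 > 1 and p = (0, 1 − 1/λ20). In particular, F1(u1,u2) + F2(u1,u2) < 0 whenever (u1,u2) ∈ Λ and u1 + u2 = 1, so there are no equilibria on the segment Λ ∩ {u1 + u2 = 1}. -/
open Filter Topology Set

/-- Characterization of the equilibria on the boundary of Λ, and the fact that
there are no equilibria on the segment Λ ∩ {u₁ + u₂ = 1}. -/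
theorem boundary_equilibria_characterization
    (l10 l20 l21 δ : ℝ) (h10 : 0 ≤ l10) (h20 : 0 ≤ l20) (h21 : 0 ≤ l21) (hδ : 0 ≤ δ) :
    (∀ p : ℝ × ℝ, p ∈ lambdaRegion → (p.1 = 0 ∨ p.2 = 0 ∨ p.1 + p.2 = 1) →
      (meanField l10 l20 l21 δ p = (0, 0) ↔
        p = ((0 : ℝ), (0 : ℝ)) ∨ (1 < l10 ∧ p = (1 - 1 / l10, 0)) ∨
          (δ = 0 ∧ 1 < l20 ∧ p = (0, 1 - 1 / l20)))) ∧
    (∀ p : ℝ × ℝ, p ∈ lambdaRegion → p.1 + p.2 = 1 →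
      (meanField l10 l20 l21 δ p).1 + (meanField l10 l20 l21 δ p).2 < 0) := by
  constructor
  · rintro ⟨u, v⟩ ⟨hu, hv, huv⟩ hb
    simp only [lambdaRegion, Set.mem_setOf_eq] at *
    constructor
    · intro h
      rw [Prod.ext_iff] at h
      obtain ⟨h1, h2⟩ := h
      simp only [meanField] at h1 h2
      rcases hb with hb | hb | hb
      · -- u = 0
        subst hb
        simp only [mul_zero, zero_mul, sub_zero, zero_sub, zero_add, zero_mul,
          mul_zero, neg_add_eq_zero, neg_zero] at h1 h2
        -- h1 : δ * v = 0 (roughly)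
        rcases eq_or_lt_of_le hv with hv0 | hv0
        · left; simp [← hv0]
        · have hδ0 : δ = 0 := by
            rcases mul_eq_zero.mp (by linarith : δ * v = 0) with h | h
            · exact h
            · exact absurd h (by linarith)
          have hkey : l20 * (1 - v) = 1 := by
            have : v * (l20 * (1 - v) - 1 - δ) = 0 := by ring_nf; ring_nf at h2; linarith
            rcases mul_eq_zero.mp this with h | h
            · exact absurd h (by linarith)
            · rw [hδ0] at h; linarith
          have hvlt : 1 - v < 1 := by linarith
          have hvpos : 0 < 1 - v := by
            by_contra hc
            push_neg at hc
            nlinarith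
          have hl20 : 1 < l20 := by nlinarith
          have hl20' : l20 ≠ 0 := by linarith
          right; right
          refine ⟨hδ0, hl20, ?_⟩
          have : v = 1 - 1 / l20 := by field_simp; nlinarith
          simp [this]
      · -- v = 0
        subst hb
        simp only [mul_zero, zero_mul, sub_zero, add_zero, zero_add, mul_zero] at h1 h2
        rcases eq_or_lt_of_le hu with hu0 | hu0
        · left; simp [← hu0]
        · have hkey : l10 * (1 - u) = 1 := by
            have : u * (l10 * (1 - u) - 1) = 0 := by ring_nf; ring_nf at h1; linarith
            rcases mul_eq_zero.mp this with h | h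
            · exact absurd h (by linarith)
            · linarith
          have hupos : 0 < 1 - u := by
            by_contra hc
            push_neg at hc
            nlinarith
          have hl10 : 1 < l10 := by nlinarith
          have hl10' : l10 ≠ 0 := by linarith
          right; left
          refine ⟨hl10, ?_⟩
          have : u = 1 - 1 / l10 := by field_simp; nlinarith
          simp [this]
      · -- u + v = 1
        exfalso
        have hc : (1 : ℝ) - u - v = 0 := by linarith
        rw [hc] at h1 h2
        simp only [mul_zero, zero_sub] at h1 h2
        linarith
    · rintro (h | ⟨hl, h⟩ | ⟨hδ0, hl, h⟩) <;>
        rw [Prod.ext_iff] at h <;> obtain ⟨h1, h2⟩ := h <;> subst h1 <;> subst h2 <;>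
        simp only [meanField, Prod.mk.injEq]
      · norm_num
      · have : l10 ≠ 0 := by intro h; rw [h] at hl; norm_num at hl
        constructor <;> field_simp <;> ring
      · subst hδ0
        have : l20 ≠ 0 := by intro h; rw [h] at hl; norm_num at hl
        constructor <;> field_simp <;> ring
  · rintro ⟨u, v⟩ ⟨hu, hv, huv⟩ h1
    have hc : (1 : ℝ) - u - v = 0 := by
      simp only [Prod.fst, Prod.snd] at h1 ⊢; linarith
    simp only [meanField, hc, mul_zero, zero_sub]
    simp only at h1
    linarith
end

section
/- Let B(u1,u2) = 1/(u1·u2). For every point (u1,u2) in the interior of Λ (i.e., u1 > 0, u2 > 0, u1 + u2 < 1), the divergence of the vector field B·F at (u1,u2), namely ∂/∂u1 (B·F1) + ∂/∂u2 (B·F2), equals −λ10/u2 − δ/u1² − λ20/u1. In particular, if (λ10, λ20, δ) ≠ (0,0,0), this divergence is strictly negative on the interior of Λ, so B is a Dulac function for the mean-field system there. -/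
open Filter Topology Set

/-- B(u₁,u₂) = 1/(u₁u₂) is a Dulac function for the mean-field system on the
interior of Λ: the divergence of B·F equals −λ10/u₂ − δ/u₁² − λ20/u₁, which is
strictly negative when (λ10, λ20, δ) ≠ (0,0,0). -/
theorem dulac_function_divergence
    (l10 l20 l21 δ : ℝ) (h10 : 0 ≤ l10) (h20 : 0 ≤ l20) (h21 : 0 ≤ l21) (hδ : 0 ≤ δ) :
    ∀ p : ℝ × ℝ, 0 < p.1 → 0 < p.2 → p.1 + p.2 < 1 →
      ∃ d1 d2 : ℝ,
        HasDerivAt (fun x : ℝ =>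
          (1 / (x * p.2)) * (meanField l10 l20 l21 δ (x, p.2)).1) d1 p.1 ∧
        HasDerivAt (fun y : ℝ =>
          (1 / (p.1 * y)) * (meanField l10 l20 l21 δ (p.1, y)).2) d2 p.2 ∧
        d1 + d2 = -l10 / p.2 - δ / p.1 ^ 2 - l20 / p.1 ∧
        ((l10, l20, δ) ≠ ((0 : ℝ), (0 : ℝ), (0 : ℝ)) → d1 + d2 < 0) := by
  rintro ⟨u, v⟩ hp1 hp2 hps
  dsimp only at hp1 hp2 hps ⊢
  have hu : u ≠ 0 := ne_of_gt hp1
  have hv : v ≠ 0 := ne_of_gt hp2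
  have huv : u * v ≠ 0 := mul_ne_zero hu hv
  refine ⟨-l10 / v - δ / u ^ 2, -l20 / u, ?_, ?_, by ring, ?_⟩
  · -- first derivative
    have hA : HasDerivAt (fun x : ℝ => 1 / (x * v)) (-v / (u * v) ^ 2) u := by
      have := ((hasDerivAt_id u).mul_const v).inv huv
      simpa [one_div, Pi.inv_def] using this
    have hg : HasDerivAt (fun x : ℝ => l10 * x * (1 - x - v) - x + δ * v - l21 * x * v)
        ((l10 * (1 - u - v) + l10 * u * (-1) - 1) - l21 * v) u := by
      have t1 : HasDerivAt (fun x : ℝ => l10 * x) l10 u := by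
        simpa using (hasDerivAt_id u).const_mul l10
      have t2 : HasDerivAt (fun x : ℝ => 1 - x - v) (-1) u := by
        simpa using ((hasDerivAt_id u).const_sub 1).sub_const v
      have t4 : HasDerivAt (fun x : ℝ => l21 * x * v) (l21 * v) u := by
        simpa using ((hasDerivAt_id u).const_mul l21).mul_const v
      have := (((t1.mul t2).sub (hasDerivAt_id u)).add_const (δ * v)).sub t4
      exact this
    have h := hA.mul hg
    have hd : -l10 / v - δ / u ^ 2 =
        -v / (u * v) ^ 2 * (l10 * u * (1 - u - v) - u + δ * v - l21 * u * v) +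
        1 / (u * v) * ((l10 * (1 - u - v) + l10 * u * (-1) - 1) - l21 * v) := by
      field_simp
      ring
    rw [hd]
    exact h
  · -- second derivative
    have hA : HasDerivAt (fun y : ℝ => 1 / (u * y)) (-u / (u * v) ^ 2) v := by
      have := ((hasDerivAt_id v).const_mul u).inv huv
      simpa [one_div, Pi.inv_def] using this
    have hg : HasDerivAt (fun y : ℝ => l20 * y * (1 - u - y) - y - δ * y + l21 * u * y)
        (((l20 * (1 - u - v) + l20 * v * (-1) - 1) - δ) + l21 * u) v := by
      have t1 : HasDerivAt (fun y : ℝ => l20 * y) l20 v := by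
        simpa using (hasDerivAt_id v).const_mul l20
      have t2 : HasDerivAt (fun y : ℝ => 1 - u - y) (-1) v := by
        simpa using (hasDerivAt_id v).const_sub (1 - u)
      have t3 : HasDerivAt (fun y : ℝ => δ * y) δ v := by
        simpa using (hasDerivAt_id v).const_mul δ
      have t4 : HasDerivAt (fun y : ℝ => l21 * u * y) (l21 * u) v := by
        simpa using (hasDerivAt_id v).const_mul (l21 * u)
      have := (((t1.mul t2).sub (hasDerivAt_id v)).sub t3).add t4
      exact this
    have h := hA.mul hg
    have hd : -l20 / u =
        -u / (u * v) ^ 2 * (l20 * v * (1 - u - v) - v - δ * v + l21 * u * v) +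
        1 / (u * v) * ((((l20 * (1 - u - v) + l20 * v * (-1) - 1) - δ) + l21 * u)) := by
      field_simp
      ring
    rw [hd]
    exact h
  · intro hne
    have hpos : 0 < l10 / v + δ / u ^ 2 + l20 / u := by
      rcases h10.lt_or_eq with h | h
      · have a : 0 < l10 / v := div_pos h hp2
        have b : 0 ≤ δ / u ^ 2 := by positivity
        have c : 0 ≤ l20 / u := by positivity
        linarith
      · rcases h20.lt_or_eq with h2 | h2
        · have a : 0 ≤ l10 / v := by positivity
          have b : 0 ≤ δ / u ^ 2 := by positivity
          have c : 0 < l20 / u := div_pos h2 hp1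
          linarith
        · rcases hδ.lt_or_eq with h3 | h3
          · have a : 0 ≤ l10 / v := by positivity
            have b : 0 < δ / u ^ 2 := div_pos h3 (by positivity)
            have c : 0 ≤ l20 / u := by positivity
            linarith
          · exact absurd (by rw [← h, ← h2, ← h3]) hne
    have e : -l10 / v - δ / u ^ 2 + -l20 / u = -(l10 / v + δ / u ^ 2 + l20 / u) := by
      ring
    linarith [e, hpos]
end

section
/- Suppose λ10 > 1 or λ20 > 1 + δ. Then the equilibrium p0 = (0,0) attracts no points of Λ+: there is no solution u : [0,∞) → ℝ² of u' = F(u) with u(0) ∈ Λ+ and u(t) → (0,0) as t → ∞. -/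
open Filter Topology Set

/- ### Auxiliary lemmas -/

lemma hasDerivWithinAt_Ici_of_Icc {f : ℝ → ℝ} {d a b x : ℝ} (hx : x ∈ Set.Ico a b)
    (h : HasDerivWithinAt f d (Set.Icc a b) x) : HasDerivWithinAt f d (Set.Ici x) x := by
  apply h.mono_of_mem_nhdsWithin
  refine mem_nhdsWithin.2 ⟨Set.Iio b, isOpen_Iio, hx.2, ?_⟩
  rintro y ⟨hy1, hy2⟩
  exact ⟨hx.1.trans hy2, le_of_lt hy1⟩

/-- One-sided Grönwall inequality with zero initial data and zero forcing. -/
lemma gronwall_zero {f f' : ℝ → ℝ} {a b K : ℝ} (hab : a ≤ b)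
    (hc : ContinuousOn f (Set.Icc a b))
    (hd : ∀ t ∈ Set.Ico a b, HasDerivWithinAt f (f' t) (Set.Icc a b) t)
    (hb : ∀ t ∈ Set.Ico a b, f' t ≤ K * f t)
    (ha : f a ≤ 0) : f b ≤ 0 := by
  have h := le_gronwallBound_of_liminf_deriv_right_le (f' := f') (δ := 0) (K := K) (ε := 0) hc
    (fun x hx r hr => (hasDerivWithinAt_Ici_of_Icc hx (hd x hx)).liminf_right_slope_le hr)
    ha (fun x hx => by simpa using hb x hx)
  simpa [gronwallBound_ε0_δ0] using h b (Set.right_mem_Icc.2 hab)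

/-- A scalar function satisfying `v' = h v + k` with `k ≥ 0` and `v a ≥ 0` stays nonnegative. -/
lemma nonneg_of_ode {v h k : ℝ → ℝ} {a b K : ℝ} (hab : a ≤ b)
    (hc : ContinuousOn v (Set.Icc a b))
    (hd : ∀ t ∈ Set.Icc a b, HasDerivWithinAt v (h t * v t + k t) (Set.Icc a b) t)
    (hK : ∀ t ∈ Set.Icc a b, h t ≤ K)
    (hk : ∀ t ∈ Set.Icc a b, 0 ≤ k t)
    (hva : 0 ≤ v a) : 0 ≤ v b := by
  by_contra hvb
  push_neg at hvb
  set S : Set ℝ := Set.Icc a b ∩ v ⁻¹' Set.Ici 0 with hS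
  have hSclosed : IsClosed S := hc.preimage_isClosed_of_isClosed isClosed_Icc isClosed_Ici
  have haS : a ∈ S := ⟨Set.left_mem_Icc.2 hab, hva⟩
  have hSbdd : BddAbove S := ⟨b, fun t ht => ht.1.2⟩
  set t0 := sSup S with ht0def
  have ht0S : t0 ∈ S := hSclosed.csSup_mem ⟨a, haS⟩ hSbdd
  have ht0a : a ≤ t0 := le_csSup hSbdd haS
  have ht0b : t0 ≤ b := ht0S.1.2
  have ht0nn : (0:ℝ) ≤ v t0 := ht0S.2
  have ht0lt : t0 < b := by
    rcases ht0b.lt_or_eq with h' | h'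
    · exact h'
    · exact absurd (h' ▸ ht0nn) (not_le.2 hvb)
  have hneg : ∀ t, t0 < t → t ≤ b → v t < 0 := by
    intro t ht1 ht2
    by_contra hvt
    push_neg at hvt
    have hts : t ∈ S := ⟨⟨ht0a.trans ht1.le, ht2⟩, hvt⟩
    exact absurd (le_csSup hSbdd hts) (not_le.2 ht1)
  have hv0 : v t0 = 0 := by
    refine le_antisymm ?_ ht0nn
    have hsub : Set.Ioc t0 b ⊆ Set.Icc a b := fun y hy => ⟨ht0a.trans hy.1.le, hy.2⟩
    have hcw : Filter.Tendsto v (𝓝[>] t0) (𝓝 (v t0)) := by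
      have hc2 : ContinuousWithinAt v (Set.Ioc t0 b) t0 := (hc t0 ht0S.1).mono hsub
      rw [ContinuousWithinAt] at hc2
      exact hc2.mono_left (by rw [nhdsWithin_Ioc_eq_nhdsGT ht0lt])
    refine le_of_tendsto hcw ?_
    filter_upwards [Ioc_mem_nhdsGT ht0lt] with t ht
    exact (hneg t ht.1 ht.2).le
  have key : -v b ≤ 0 := by
    have hsub : Set.Icc t0 b ⊆ Set.Icc a b := Set.Icc_subset_Icc_left ht0a
    refine gronwall_zero (f := fun t => -v t) (f' := fun t => -(h t * v t + k t))
      (a := t0) (b := b) (K := K) ht0lt.le ((hc.mono hsub).neg)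
      (fun t ht => ((hd t (hsub (Set.Ico_subset_Icc_self ht))).mono hsub).neg) ?_ (by simp [hv0])
    intro t ht
    have htm : t ∈ Set.Icc a b := hsub ⟨ht.1, ht.2.le⟩
    have hvt : v t ≤ 0 := by
      rcases ht.1.lt_or_eq with h' | h'
      · exact (hneg t h' ht.2.le).le
      · rw [← h']; exact hv0.le
    have hKt := hK t htm
    have hkt := hk t htm
    show -(h t * v t + k t) ≤ K * -v t
    nlinarith [mul_nonneg (sub_nonneg.2 hKt) (neg_nonneg.2 hvt)]
  linarith

/-- A scalar function satisfying `v' = g v` with `v a > 0` stays positive. -/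
lemma pos_of_ode {v g : ℝ → ℝ} {a b K : ℝ} (hab : a ≤ b)
    (hc : ContinuousOn v (Set.Icc a b))
    (hd : ∀ t ∈ Set.Icc a b, HasDerivWithinAt v (g t * v t) (Set.Icc a b) t)
    (hK : ∀ t ∈ Set.Icc a b, |g t| ≤ K)
    (hva : 0 < v a) : 0 < v b := by
  have hnn : 0 ≤ v b :=
    nonneg_of_ode (h := g) (k := fun _ => 0) hab hc (fun t ht => by simpa using hd t ht)
      (fun t ht => (le_abs_self _).trans (hK t ht)) (fun t ht => le_rfl) hva.le
  rcases hnn.lt_or_eq with h' | h'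
  · exact h'
  exfalso
  have hmaps : Set.MapsTo (fun s : ℝ => b - s) (Set.Icc 0 (b - a)) (Set.Icc a b) := by
    intro s hs
    simp only [Set.mem_Icc] at hs ⊢
    constructor <;> linarith
  have hwc : ContinuousOn (fun s : ℝ => -v (b - s)) (Set.Icc 0 (b - a)) :=
    (hc.comp ((continuous_const.sub continuous_id).continuousOn) hmaps).neg
  have hwd : ∀ s ∈ Set.Icc (0:ℝ) (b - a),
      HasDerivWithinAt (fun s : ℝ => -v (b - s))
        ((-(g (b - s))) * (-v (b - s)) + 0) (Set.Icc 0 (b - a)) s := by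
    intro s hs
    have h1 : HasDerivWithinAt (fun s : ℝ => b - s) (-1) (Set.Icc 0 (b - a)) s :=
      ((hasDerivAt_id s).const_sub b).hasDerivWithinAt
    have h2 := HasDerivWithinAt.comp s (hd (b - s) (hmaps hs)) h1 hmaps
    have h3 := h2.neg
    exact h3.congr_deriv (by ring)
  have hfin := nonneg_of_ode (v := fun s : ℝ => -v (b - s)) (h := fun s => -(g (b - s)))
    (k := fun _ => 0) (K := K) (by linarith : (0:ℝ) ≤ b - a) hwc hwd
    (fun s hs => (neg_le_abs _).trans (hK _ (hmaps hs)))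
    (fun s hs => le_rfl) (by simp [← h'])
  simp only [sub_sub_cancel] at hfin
  linarith

lemma strictMonoOn_Ici_of_deriv {v dv : ℝ → ℝ} {T : ℝ}
    (hc : ContinuousOn v (Set.Ici T))
    (hd : ∀ t, T < t → HasDerivAt v (dv t) t)
    (hpos : ∀ t, T < t → 0 < dv t) : StrictMonoOn v (Set.Ici T) := by
  apply strictMonoOn_of_deriv_pos (convex_Ici T) hc
  intro x hx
  rw [interior_Ici] at hx
  rw [(hd x hx).deriv]
  exact hpos x hx

lemma not_tendsto_zero_of_strictMonoOn {v : ℝ → ℝ} {T : ℝ}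
    (hmono : StrictMonoOn v (Set.Ici T)) (h0 : 0 ≤ v T)
    (hlim : Filter.Tendsto v Filter.atTop (𝓝 0)) : False := by
  have h1 : 0 < v (T + 1) :=
    lt_of_le_of_lt h0 (hmono Set.self_mem_Ici (by simp : T + 1 ∈ Set.Ici T) (by linarith))
  have hball : ∀ᶠ y in 𝓝 (0:ℝ), |y| < v (T + 1) := by
    filter_upwards [Metric.ball_mem_nhds (0:ℝ) h1] with y hy
    simpa [Real.dist_eq] using hy
  rcases ((hlim.eventually hball).and (Filter.eventually_ge_atTop (T + 2))).exists with ⟨t, h3, h4⟩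
  have h5 : v (T + 1) < v t :=
    hmono (by simp : T + 1 ∈ Set.Ici T) (by simp; linarith : t ∈ Set.Ici T) (by linarith)
  have := (le_abs_self (v t)).trans_lt h3
  linarith

lemma hasDerivWithinAt_fst' {u : ℝ → ℝ × ℝ} {d : ℝ × ℝ} {s : Set ℝ} {t : ℝ}
    (h : HasDerivWithinAt u d s t) : HasDerivWithinAt (fun t => (u t).1) d.1 s t := by
  have h2 := h.hasFDerivWithinAt.fst.hasDerivWithinAt
  simpa using h2

lemma hasDerivWithinAt_snd' {u : ℝ → ℝ × ℝ} {d : ℝ × ℝ} {s : Set ℝ} {t : ℝ}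
    (h : HasDerivWithinAt u d s t) : HasDerivWithinAt (fun t => (u t).2) d.2 s t := by
  have h2 := h.hasFDerivWithinAt.snd.hasDerivWithinAt
  simpa using h2

/-- If λ10 > 1 or λ20 > 1 + δ, the equilibrium (0,0) attracts no points of Λ₊. -/
theorem origin_attracts_no_point_of_lambdaPlus
    (l10 l20 l21 δ : ℝ) (h10 : 0 ≤ l10) (h20 : 0 ≤ l20) (h21 : 0 ≤ l21) (hδ : 0 ≤ δ)
    (h : 1 < l10 ∨ 1 + δ < l20) :
    ¬ ∃ u : ℝ → ℝ × ℝ, IsSolution l10 l20 l21 δ u ∧ u 0 ∈ lambdaPlus δ ∧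
        Tendsto u atTop (𝓝 ((0 : ℝ), (0 : ℝ))) := by
  rintro ⟨u, hsol, hu0, hlim⟩
  simp only [lambdaPlus, lambdaRegion, Set.mem_setOf_eq] at hu0
  set u1 : ℝ → ℝ := fun t => (u t).1 with hu1def
  set u2 : ℝ → ℝ := fun t => (u t).2 with hu2def
  set A1 : ℝ → ℝ := fun t => l10 * (1 - u1 t - u2 t) - 1 - l21 * u2 t with hA1def
  set A2 : ℝ → ℝ := fun t => l20 * (1 - u1 t - u2 t) - 1 - δ + l21 * u1 t with hA2def
  have hd1 : ∀ t, 0 ≤ t → HasDerivWithinAt u1 (A1 t * u1 t + δ * u2 t) (Set.Ici 0) t := by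
    intro t ht
    have h2 := hasDerivWithinAt_fst' (hsol t ht)
    convert h2 using 1
    simp only [hA1def, hu1def, hu2def, meanField]
    ring
  have hd2 : ∀ t, 0 ≤ t → HasDerivWithinAt u2 (A2 t * u2 t) (Set.Ici 0) t := by
    intro t ht
    have h2 := hasDerivWithinAt_snd' (hsol t ht)
    convert h2 using 1
    simp only [hA2def, hu1def, hu2def, meanField]
    ring
  have hcont : ContinuousOn u (Set.Ici 0) := fun t ht => (hsol t ht).continuousWithinAt
  have hcont1 : ContinuousOn u1 (Set.Ici 0) := continuous_fst.comp_continuousOn hcont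
  have hcont2 : ContinuousOn u2 (Set.Ici 0) := continuous_snd.comp_continuousOn hcont
  have hcA1 : ContinuousOn A1 (Set.Ici 0) :=
    ((continuousOn_const.mul ((continuousOn_const.sub hcont1).sub hcont2)).sub
      continuousOn_const).sub (continuousOn_const.mul hcont2)
  have hcA2 : ContinuousOn A2 (Set.Ici 0) :=
    (((continuousOn_const.mul ((continuousOn_const.sub hcont1).sub hcont2)).sub
      continuousOn_const).sub continuousOn_const).add (continuousOn_const.mul hcont1)
  have hlim1 : Tendsto u1 atTop (𝓝 0) := by
    have := (continuous_fst.tendsto ((0:ℝ),(0:ℝ))).comp hlim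
    exact this
  have hlim2 : Tendsto u2 atTop (𝓝 0) := by
    have := (continuous_snd.tendsto ((0:ℝ),(0:ℝ))).comp hlim
    exact this
  have hu01 : 0 ≤ u1 0 := hu0.1.1
  have hu02 : 0 < u2 0 := hu0.2.1
  have hu01pos : δ = 0 → 0 < u1 0 := hu0.2.2
  -- u2 stays positive
  have hu2pos : ∀ b, 0 ≤ b → 0 < u2 b := by
    intro b hb
    obtain ⟨K, hKb⟩ := (isCompact_Icc (a := (0:ℝ)) (b := b)).exists_bound_of_continuousOn
      (hcA2.mono Set.Icc_subset_Ici_self)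
    refine pos_of_ode (g := A2) (K := K) hb (hcont2.mono Set.Icc_subset_Ici_self)
      (fun t ht => (hd2 t ht.1).mono Set.Icc_subset_Ici_self)
      (fun t ht => by simpa [Real.norm_eq_abs] using hKb t ht) hu02
  -- eventual smallness
  have hsmall : ∀ ε : ℝ, 0 < ε → ∃ T : ℝ, 0 ≤ T ∧ ∀ t, T ≤ t → |u1 t| < ε ∧ |u2 t| < ε := by
    intro ε hε
    have hball : ∀ᶠ y in 𝓝 (0:ℝ), |y| < ε := by
      filter_upwards [Metric.ball_mem_nhds (0:ℝ) hε] with y hy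
      simpa [Real.dist_eq] using hy
    rcases Filter.eventually_atTop.1 ((hlim1.eventually hball).and (hlim2.eventually hball))
      with ⟨T, hT⟩
    exact ⟨max T 0, le_max_right _ _, fun t ht => hT t (le_trans (le_max_left _ _) ht)⟩
  rcases h with hl10 | hl20
  · -- case 1 < l10
    set ε := (l10 - 1) / (2 * l10 + l21 + 1) with hεdef
    have hEpos : 0 < 2 * l10 + l21 + 1 := by linarith
    have hεpos : 0 < ε := div_pos (by linarith) hEpos
    have hεE : ε * (2 * l10 + l21 + 1) = l10 - 1 := by
      rw [hεdef]; field_simp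
    obtain ⟨T, hT0, hTs⟩ := hsmall ε hεpos
    have hA1pos : ∀ t, T ≤ t → 0 < A1 t := by
      intro t ht
      obtain ⟨hb1, hb2⟩ := hTs t ht
      rw [abs_lt] at hb1 hb2
      have e1 : l10 * u1 t ≤ l10 * ε := mul_le_mul_of_nonneg_left hb1.2.le h10
      have e2 : l10 * u2 t ≤ l10 * ε := mul_le_mul_of_nonneg_left hb2.2.le h10
      have e3 : l21 * u2 t ≤ l21 * ε := mul_le_mul_of_nonneg_left hb2.2.le h21
      have expand : A1 t = l10 - l10 * u1 t - l10 * u2 t - 1 - l21 * u2 t := by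
        simp only [hA1def]; ring
      rw [expand]
      linarith [hεE, hεpos]
    rcases hδ.lt_or_eq with hδpos | hδ0
    · -- 0 < δ : u1 stays nonnegative, then strictly increases
      have hu1nn : ∀ b, 0 ≤ b → 0 ≤ u1 b := by
        intro b hb
        obtain ⟨K, hKb⟩ := (isCompact_Icc (a := (0:ℝ)) (b := b)).exists_bound_of_continuousOn
          (hcA1.mono Set.Icc_subset_Ici_self)
        refine nonneg_of_ode (h := A1) (k := fun t => δ * u2 t) (K := K) hb
          (hcont1.mono Set.Icc_subset_Ici_self)
          (fun t ht => (hd1 t ht.1).mono Set.Icc_subset_Ici_self)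
          (fun t ht => (le_abs_self _).trans (by simpa [Real.norm_eq_abs] using hKb t ht))
          (fun t ht => mul_nonneg hδ (hu2pos t ht.1).le) hu01
      have hmono : StrictMonoOn u1 (Set.Ici T) := by
        refine strictMonoOn_Ici_of_deriv (dv := fun t => A1 t * u1 t + δ * u2 t)
          (hcont1.mono (Set.Ici_subset_Ici.2 hT0)) (fun t ht => ?_) (fun t ht => ?_)
        · have h0t : (0:ℝ) < t := lt_of_le_of_lt hT0 ht
          exact (hd1 t h0t.le).hasDerivAt (Ici_mem_nhds h0t)
        · have h0t : (0:ℝ) < t := lt_of_le_of_lt hT0 ht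
          exact add_pos_of_nonneg_of_pos
            (mul_nonneg (hA1pos t ht.le).le (hu1nn t h0t.le))
            (mul_pos hδpos (hu2pos t h0t.le))
      exact not_tendsto_zero_of_strictMonoOn hmono (hu1nn T hT0) hlim1
    · -- δ = 0 : u1 stays positive, then strictly increases
      have hu1pos : ∀ b, 0 ≤ b → 0 < u1 b := by
        intro b hb
        obtain ⟨K, hKb⟩ := (isCompact_Icc (a := (0:ℝ)) (b := b)).exists_bound_of_continuousOn
          (hcA1.mono Set.Icc_subset_Ici_self)
        refine pos_of_ode (g := A1) (K := K) hb (hcont1.mono Set.Icc_subset_Ici_self)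
          (fun t ht => ?_) (fun t ht => by simpa [Real.norm_eq_abs] using hKb t ht)
          (hu01pos hδ0.symm)
        have h2 := (hd1 t ht.1).mono (Set.Icc_subset_Ici_self :
          Set.Icc (0:ℝ) b ⊆ Set.Ici 0)
        simpa [← hδ0] using h2
      have hmono : StrictMonoOn u1 (Set.Ici T) := by
        refine strictMonoOn_Ici_of_deriv (dv := fun t => A1 t * u1 t + δ * u2 t)
          (hcont1.mono (Set.Ici_subset_Ici.2 hT0)) (fun t ht => ?_) (fun t ht => ?_)
        · have h0t : (0:ℝ) < t := lt_of_le_of_lt hT0 ht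
          exact (hd1 t h0t.le).hasDerivAt (Ici_mem_nhds h0t)
        · have h0t : (0:ℝ) < t := lt_of_le_of_lt hT0 ht
          have hp : 0 < A1 t * u1 t := mul_pos (hA1pos t ht.le) (hu1pos t h0t.le)
          have : δ * u2 t = 0 := by rw [← hδ0]; ring
          show 0 < A1 t * u1 t + δ * u2 t
          linarith
      exact not_tendsto_zero_of_strictMonoOn hmono (hu1pos T hT0).le hlim1
  · -- case 1 + δ < l20
    set ε := (l20 - 1 - δ) / (2 * l20 + l21 + 1) with hεdef
    have hEpos : 0 < 2 * l20 + l21 + 1 := by linarith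
    have hεpos : 0 < ε := div_pos (by linarith) hEpos
    have hεE : ε * (2 * l20 + l21 + 1) = l20 - 1 - δ := by
      rw [hεdef]; field_simp
    obtain ⟨T, hT0, hTs⟩ := hsmall ε hεpos
    have hA2pos : ∀ t, T ≤ t → 0 < A2 t := by
      intro t ht
      obtain ⟨hb1, hb2⟩ := hTs t ht
      rw [abs_lt] at hb1 hb2
      have e1 : l20 * u1 t ≤ l20 * ε := mul_le_mul_of_nonneg_left hb1.2.le h20
      have e2 : l20 * u2 t ≤ l20 * ε := mul_le_mul_of_nonneg_left hb2.2.le h20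
      have e3 : l21 * (-ε) ≤ l21 * u1 t := mul_le_mul_of_nonneg_left hb1.1.le h21
      have expand : A2 t = l20 - l20 * u1 t - l20 * u2 t - 1 - δ + l21 * u1 t := by
        simp only [hA2def]; ring
      rw [expand]
      nlinarith [hεE, hεpos]
    have hmono : StrictMonoOn u2 (Set.Ici T) := by
      refine strictMonoOn_Ici_of_deriv (dv := fun t => A2 t * u2 t)
        (hcont2.mono (Set.Ici_subset_Ici.2 hT0)) (fun t ht => ?_) (fun t ht => ?_)
      · have h0t : (0:ℝ) < t := lt_of_le_of_lt hT0 ht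
        exact (hd2 t h0t.le).hasDerivAt (Ici_mem_nhds h0t)
      · have h0t : (0:ℝ) < t := lt_of_le_of_lt hT0 ht
        exact mul_pos (hA2pos t ht.le) (hu2pos t h0t.le)
    exact not_tendsto_zero_of_strictMonoOn hmono (hu2pos T hT0).le hlim2
end

section
/- Suppose δ = 0, λ20 > 1 and λ10/λ20 − λ21·(1 − 1/λ20) > 1. Then the equilibrium p2 = (0, 1 − 1/λ20) attracts no points of Λ+: there is no solution u : [0,∞) → ℝ² of u' = F(u) with u(0) ∈ Λ+ and u(t) → (0, 1 − 1/λ20) as t → ∞. -/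
open Filter Topology Set

/-- Auxiliary: a function with nonnegative derivative on the interior of `[a,b]`
is at `b` at least its value at `a`. -/
lemma le_of_hasDerivAt_nonneg_aux {f : ℝ → ℝ} {a b : ℝ} (hab : a ≤ b)
    (hc : ContinuousOn f (Set.Icc a b))
    (hd : ∀ t ∈ Set.Ioo a b, ∃ d, HasDerivAt f d t ∧ 0 ≤ d) :
    f a ≤ f b := by
  have h := monotoneOn_of_deriv_nonneg (convex_Icc a b) hc ?_ ?_
  · exact h (Set.left_mem_Icc.2 hab) (Set.right_mem_Icc.2 hab) hab
  · intro t ht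
    rw [interior_Icc] at ht
    obtain ⟨d, hdd, _⟩ := hd t ht
    exact hdd.differentiableAt.differentiableWithinAt
  · intro t ht
    rw [interior_Icc] at ht
    obtain ⟨d, hdd, hd0⟩ := hd t ht
    rw [hdd.deriv]; exact hd0

/-- If δ = 0, λ20 > 1 and the (1s invade 2s) inequality holds, the equilibrium
p₂ = (0, 1 − 1/λ20) attracts no points of Λ₊. -/
theorem p2_attracts_no_point_of_lambdaPlus
    (l10 l20 l21 δ : ℝ) (h10 : 0 ≤ l10) (h20 : 0 < l20) (h21 : 0 ≤ l21) (hδ : 0 ≤ δ)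
    (hδ0 : δ = 0) (h20gt : 1 < l20)
    (h1in2 : l10 / l20 - l21 * (1 - 1 / l20) > 1) :
    ¬ ∃ u : ℝ → ℝ × ℝ, IsSolution l10 l20 l21 δ u ∧ u 0 ∈ lambdaPlus δ ∧
        Tendsto u atTop (𝓝 ((0, 1 - 1 / l20) : ℝ × ℝ)) := by
  subst hδ0
  rintro ⟨u, hsol, hinit, hlim⟩
  obtain ⟨hreg, hy0, hx0pos⟩ := hinit
  have hx0 : 0 < (u 0).1 := hx0pos rfl
  set g : ℝ → ℝ := fun t => l10 * (1 - (u t).1 - (u t).2) - 1 - l21 * (u t).2 with hg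
  -- derivative of the first coordinate
  have hx' : ∀ t, 0 ≤ t →
      HasDerivWithinAt (fun s => (u s).1) ((u t).1 * g t) (Set.Ici 0) t := by
    intro t ht
    have h2 := (ContinuousLinearMap.fst ℝ ℝ ℝ).hasFDerivAt.comp_hasDerivWithinAt t (hsol t ht)
    refine HasDerivWithinAt.congr_deriv h2 ?_
    simp only [ContinuousLinearMap.coe_fst', meanField, hg]
    ring
  have hucont : ContinuousOn u (Set.Ici 0) := fun t ht => (hsol t ht).continuousWithinAt
  have hxcont : ContinuousOn (fun s => (u s).1) (Set.Ici 0) := hucont.fst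
  have hGc : Continuous (fun p : ℝ × ℝ => l10 * (1 - p.1 - p.2) - 1 - l21 * p.2) := by fun_prop
  have hgcont : ContinuousOn g (Set.Ici 0) := hGc.comp_continuousOn hucont
  -- limit of g
  set c : ℝ := l10 * (1 - 0 - (1 - 1 / l20)) - 1 - l21 * (1 - 1 / l20) with hcdef
  have hgl : Tendsto g atTop (𝓝 c) := (hGc.tendsto _).comp hlim
  have hc : 0 < c := by
    have h1 : l10 * (1 - 0 - (1 - 1 / l20)) = l10 / l20 := by ring
    rw [hcdef, h1]; linarith
  clear_value c
  have hx0lim : Tendsto (fun t => (u t).1) atTop (𝓝 0) := by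
    have := (continuous_fst.tendsto ((0 : ℝ), 1 - 1 / l20)).comp hlim
    exact this
  -- positivity of the first coordinate
  have hpos : ∀ t, 0 ≤ t → 0 < (u t).1 := by
    intro t₀ ht₀
    by_contra hle
    push_neg at hle
    have ht₀pos : 0 < t₀ := by
      rcases lt_or_eq_of_le ht₀ with h | h
      · exact h
      · exfalso; rw [← h] at hle; linarith
    -- lower bound for g on [0, t₀]
    obtain ⟨k, hkmem, hkmin⟩ := isCompact_Icc.exists_isMinOn
      ⟨0, Set.left_mem_Icc.2 ht₀⟩ (hgcont.mono (Set.Icc_subset_Ici_self))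
    set K : ℝ := max 0 (-(g k)) with hKdef
    have hKg : ∀ s ∈ Set.Icc (0:ℝ) t₀, 0 ≤ g s + K := by
      intro s hs
      have h1 : g k ≤ g s := hkmin hs
      have h2 : -(g k) ≤ K := le_max_right _ _
      linarith
    -- first time the first coordinate is nonpositive
    set S : Set ℝ := {t | t ∈ Set.Icc (0:ℝ) t₀ ∧ (u t).1 ≤ 0} with hSdef
    have hSne : S.Nonempty := ⟨t₀, Set.right_mem_Icc.2 ht₀, hle⟩
    have hSbdd : BddBelow S := ⟨0, fun t ht => ht.1.1⟩
    have hSclosed : IsClosed S := by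
      have : S = Set.Icc (0:ℝ) t₀ ∩ (fun s => (u s).1) ⁻¹' Set.Iic 0 := by
        ext t; simp [hSdef, Set.mem_Icc, and_assoc]
      rw [this]
      exact ContinuousOn.preimage_isClosed_of_isClosed
        (hxcont.mono Set.Icc_subset_Ici_self) isClosed_Icc isClosed_Iic
    set s := sInf S with hsdef
    have hsS : s ∈ S := hSclosed.csInf_mem hSne hSbdd
    have hsIcc : s ∈ Set.Icc (0:ℝ) t₀ := hsS.1
    have hsle : (u s).1 ≤ 0 := hsS.2
    have hslt : ∀ t, 0 ≤ t → t < s → 0 < (u t).1 := by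
      intro t ht hts
      by_contra h
      push_neg at h
      have : t ∈ S := ⟨⟨ht, le_trans hts.le hsIcc.2⟩, h⟩
      exact absurd (csInf_le hSbdd this) (not_le.2 hts)
    have hspos : 0 < s := by
      rcases lt_or_eq_of_le hsIcc.1 with h | h
      · exact h
      · exfalso; rw [← h] at hsle; linarith
    -- the function φ t = x t * exp (K t) is monotone on [0, s]
    have hmono : (u 0).1 * Real.exp (K * 0) ≤ (u s).1 * Real.exp (K * s) := by
      apply le_of_hasDerivAt_nonneg_aux (f := fun r => (u r).1 * Real.exp (K * r)) hspos.le
      · exact ((hxcont.mono (fun p hp => hp.1)).mul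
          (Real.continuous_exp.comp (continuous_const.mul continuous_id)).continuousOn)
      · intro t ht
        have ht0 : 0 ≤ t := ht.1.le
        have hxda : HasDerivAt (fun s => (u s).1) ((u t).1 * g t) t :=
          (hx' t ht0).hasDerivAt (Ici_mem_nhds ht.1)
        have hexp : HasDerivAt (fun t => Real.exp (K * t)) (Real.exp (K * t) * K) t := by
          have : HasDerivAt (fun t : ℝ => K * t) K t := by
            simpa using (hasDerivAt_id t).const_mul K
          exact this.exp
        refine ⟨_, hxda.mul hexp, ?_⟩
        have hxt : 0 < (u t).1 := hslt t ht0 ht.2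
        have hgK : 0 ≤ g t + K := hKg t ⟨ht0, le_trans ht.2.le hsIcc.2⟩
        have heq : (u t).1 * g t * Real.exp (K * t) + (u t).1 * (Real.exp (K * t) * K)
            = (u t).1 * Real.exp (K * t) * (g t + K) := by ring
        rw [heq]
        positivity
    have h1 : (0:ℝ) < (u 0).1 * Real.exp (K * 0) := by positivity
    have h2 : (u s).1 * Real.exp (K * s) ≤ 0 :=
      mul_nonpos_of_nonpos_of_nonneg hsle (Real.exp_pos _).le
    linarith
  -- eventually g is at least c/2
  have hev : ∀ᶠ t in atTop, c / 2 < g t := hgl.eventually (eventually_gt_nhds (by linarith))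
  obtain ⟨T₀, hT₀⟩ := eventually_atTop.1 hev
  set T : ℝ := max T₀ 0 with hTdef
  have hT0 : (0:ℝ) ≤ T := le_max_right _ _
  have hTg : ∀ t, T ≤ t → c / 2 < g t := fun t ht => hT₀ t (le_trans (le_max_left _ _) ht)
  -- on [T, ∞) the first coordinate is nondecreasing (ψ monotone)
  have hle : ∀ t, T ≤ t → (u T).1 ≤ (u t).1 := by
    intro t ht
    have hψ : (u T).1 * Real.exp (-(c/2) * T) ≤ (u t).1 * Real.exp (-(c/2) * t) := by
      apply le_of_hasDerivAt_nonneg_aux (f := fun r => (u r).1 * Real.exp (-(c/2) * r)) ht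
      · refine ((hxcont.mono ?_).mul
          (Real.continuous_exp.comp (continuous_const.mul continuous_id)).continuousOn)
        exact fun p hp => le_trans hT0 hp.1
      · intro r hr
        have hr0 : 0 ≤ r := le_trans hT0 hr.1.le
        have hxda : HasDerivAt (fun s => (u s).1) ((u r).1 * g r) r :=
          (hx' r hr0).hasDerivAt (Ici_mem_nhds (lt_of_le_of_lt hT0 hr.1))
        have hexp : HasDerivAt (fun t => Real.exp (-(c/2) * t))
            (Real.exp (-(c/2) * r) * (-(c/2))) r := by
          have : HasDerivAt (fun t : ℝ => -(c/2) * t) (-(c/2)) r := by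
            simpa using (hasDerivAt_id r).const_mul (-(c/2))
          exact this.exp
        refine ⟨_, hxda.mul hexp, ?_⟩
        have hxr : 0 < (u r).1 := hpos r hr0
        have hgr : c / 2 < g r := hTg r hr.1.le
        have heq : (u r).1 * g r * Real.exp (-(c/2) * r)
              + (u r).1 * (Real.exp (-(c/2) * r) * (-(c/2)))
            = (u r).1 * Real.exp (-(c/2) * r) * (g r - c/2) := by ring
        rw [heq]
        have : (0:ℝ) ≤ g r - c/2 := by linarith
        positivity
    have hE : Real.exp (-(c/2) * t) ≤ Real.exp (-(c/2) * T) := by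
      apply Real.exp_le_exp.2
      nlinarith [mul_nonneg hc.le (sub_nonneg.2 ht)]
    have hxt : 0 ≤ (u t).1 := (hpos t (le_trans hT0 ht)).le
    have h3 : (u t).1 * Real.exp (-(c/2) * t) ≤ (u t).1 * Real.exp (-(c/2) * T) :=
      mul_le_mul_of_nonneg_left hE hxt
    have h4 : (u T).1 * Real.exp (-(c/2) * T) ≤ (u t).1 * Real.exp (-(c/2) * T) :=
      le_trans hψ h3
    exact le_of_mul_le_mul_right h4 (Real.exp_pos _)
  -- contradiction with x → 0
  have hxTpos : 0 < (u T).1 := hpos T hT0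
  have hevlt : ∀ᶠ t in atTop, (u t).1 < (u T).1 :=
    hx0lim.eventually (eventually_lt_nhds hxTpos)
  obtain ⟨t, ht1, ht2⟩ := (hevlt.and (eventually_ge_atTop T)).exists
  exact absurd (hle t ht2) (not_le.2 ht1)
end

section
/- Suppose δ > 0, λ10 ≤ 1 and λ20 > 1 + δ. Then there is exactly one point (u1,u2) in the interior of Λ (i.e., with u1 > 0, u2 > 0 and u1 + u2 < 1) satisfying F1(u1,u2) = 0 and F2(u1,u2) = 0. -/
open Filter Topology Set

set_option maxHeartbeats 1000000

/-- If δ > 0, λ10 ≤ 1 and λ20 > 1 + δ, there is exactly one interior equilibrium. -/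
theorem unique_interior_equilibrium_case_a
    (l10 l20 l21 δ : ℝ) (h10 : 0 ≤ l10) (h20 : 0 ≤ l20) (h21 : 0 ≤ l21) (hδ : 0 ≤ δ)
    (hδpos : 0 < δ) (h10le : l10 ≤ 1) (h20gt : 1 + δ < l20) :
    ∃! p : ℝ × ℝ, (0 < p.1 ∧ 0 < p.2 ∧ p.1 + p.2 < 1) ∧
      (meanField l10 l20 l21 δ p).1 = 0 ∧ (meanField l10 l20 l21 δ p).2 = 0 := by
  have hl20 : (0:ℝ) < l20 := by linarith
  have hl20' : l20 ≠ 0 := ne_of_gt hl20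
  have hA : 0 < l20 - 1 - δ := by linarith
  set a : ℝ := l21 * (l20 - l21 - l10) with ha
  set b' : ℝ := l10 * (1 + δ) - l20 - δ * (l20 - l21) - l21 * (l20 - 1 - δ) with hb
  set c : ℝ := δ * (l20 - 1 - δ) with hc
  set g : ℝ → ℝ := fun x => a * x ^ 2 + b' * x + c with hg
  set φ : ℝ → ℝ := fun x => ((l20 - 1 - δ) - (l20 - l21) * x) / l20 with hφ
  have hmf1 : ∀ u v : ℝ, (meanField l10 l20 l21 δ (u, v)).1
      = l10 * u * (1 - u - v) - u + δ * v - l21 * u * v := fun u v => rfl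
  have hmf2 : ∀ u v : ℝ, (meanField l10 l20 l21 δ (u, v)).2
      = l20 * v * (1 - u - v) - v - δ * v + l21 * u * v := fun u v => rfl
  have hF1 : ∀ x : ℝ, (meanField l10 l20 l21 δ (x, φ x)).1 = g x / l20 := by
    intro x
    rw [hmf1]
    simp only [hg, hφ, ha, hb, hc]
    field_simp
    ring
  have hF2 : ∀ x : ℝ, (meanField l10 l20 l21 δ (x, φ x)).2 = 0 := by
    intro x
    rw [hmf2]
    simp only [hφ]
    field_simp
    ring
  have hc0 : 0 < c := hc ▸ mul_pos hδpos hA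
  have hg0 : 0 < g 0 := by
    have : g 0 = c := by simp [hg]
    linarith [this ▸ hc0]
  -- value at a point where φ vanishes
  have hgAB : ∀ x : ℝ, 0 < x → (l20 - l21) * x = l20 - 1 - δ → g x < 0 := by
    intro x hx hxe
    have h2 : g x = l20 * (x * (l10 * (1 - x) - 1)) := by
      simp only [hg, ha, hb, hc]
      linear_combination ((l10 + l21) * x - δ) * hxe
    have h3 : l10 * (1 - x) - 1 < 0 := by
      nlinarith [mul_nonneg (sub_nonneg.2 h10le) hx.le, mul_nonneg h10 hx.le]
    have h4 : x * (l10 * (1 - x) - 1) < 0 := mul_neg_of_pos_of_neg hx h3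
    rw [h2]
    exact mul_neg_of_pos_of_neg hl20 h4
  -- value at the point where the sum constraint is tight
  have hgS : 0 < l21 → g ((1 + δ) / l21) = -l20 := by
    intro h
    have h' : l21 ≠ 0 := ne_of_gt h
    simp only [hg, ha, hb, hc]
    field_simp
    ring
  -- the right endpoint R of the feasible interval
  obtain ⟨R, hR0, hgR, hfeq⟩ : ∃ R : ℝ, 0 < R ∧ g R < 0 ∧
      ∀ x : ℝ, 0 < x →
        (((l20 - l21) * x < l20 - 1 - δ ∧ l21 * x < 1 + δ) ↔ x < R) := by
    by_cases hB : 0 < l20 - l21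
    · rcases eq_or_lt_of_le h21 with h0 | h0
      · -- l21 = 0
        refine ⟨(l20 - 1 - δ) / (l20 - l21), div_pos hA hB, ?_, ?_⟩
        · apply hgAB _ (div_pos hA hB)
          field_simp
        · intro x hx
          rw [lt_div_iff₀ hB]
          constructor
          · rintro ⟨h1, _⟩; nlinarith
          · intro h; constructor
            · nlinarith
            · rw [← h0]; simp; linarith
      · -- 0 < l21
        refine ⟨min ((l20 - 1 - δ) / (l20 - l21)) ((1 + δ) / l21),
          lt_min (div_pos hA hB) (div_pos (by linarith) h0), ?_, ?_⟩
        · rcases min_cases ((l20 - 1 - δ) / (l20 - l21)) ((1 + δ) / l21) with ⟨he, _⟩ | ⟨he, _⟩ <;>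
            rw [he]
          · apply hgAB _ (div_pos hA hB)
            field_simp
          · rw [hgS h0]; linarith
        · intro x hx
          rw [lt_min_iff, lt_div_iff₀ hB, lt_div_iff₀ h0]
          constructor
          · rintro ⟨h1, h2⟩; exact ⟨by nlinarith, by nlinarith⟩
          · rintro ⟨h1, h2⟩; exact ⟨by nlinarith, by nlinarith⟩
    · -- l20 ≤ l21
      have h0 : 0 < l21 := by linarith
      refine ⟨(1 + δ) / l21, div_pos (by linarith) h0, by rw [hgS h0]; linarith, ?_⟩
      intro x hx
      rw [lt_div_iff₀ h0]
      constructor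
      · rintro ⟨_, h2⟩; nlinarith
      · intro h
        have h' : 0 ≤ (l21 - l20) * x := mul_nonneg (by linarith) hx.le
        exact ⟨by nlinarith, by nlinarith⟩
  -- existence of a root of g in (0, R)
  have hgc : Continuous g := by
    rw [hg]
    exact ((continuous_const.mul (continuous_pow 2)).add (continuous_const.mul continuous_id)).add continuous_const
  obtain ⟨x, hxI, hgx⟩ :=
    intermediate_value_Icc' hR0.le hgc.continuousOn ⟨hgR.le, hg0.le⟩
  have hx0 : 0 < x := by
    rcases lt_or_eq_of_le hxI.1 with h | h
    · exact h
    · exfalso; rw [← h] at hgx; linarith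
  have hxR : x < R := by
    rcases lt_or_eq_of_le hxI.2 with h | h
    · exact h
    · exfalso; rw [h] at hgx; linarith
  obtain ⟨hf1, hf2⟩ := (hfeq x hx0).2 hxR
  have hφx : 0 < φ x := by
    simp only [hφ]
    exact div_pos (by linarith) hl20
  have hφxl : φ x * l20 = (l20 - 1 - δ) - (l20 - l21) * x := by
    simp only [hφ]; field_simp
  have hsum : x + φ x < 1 := by
    have h5 : (x + φ x) * l20 = l20 - ((1 + δ) - l21 * x) := by linear_combination hφxl
    have h6 : (x + φ x) * l20 < 1 * l20 := by rw [h5]; linarith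
    exact lt_of_mul_lt_mul_right h6 hl20.le
  refine ⟨(x, φ x), ⟨⟨hx0, hφx, hsum⟩, by rw [hF1, hgx]; simp, hF2 x⟩, ?_⟩
  rintro ⟨q1, q2⟩ ⟨⟨hq1, hq2, hq3⟩, hQ1, hQ2⟩
  simp only at hq1 hq2 hq3
  rw [hmf1] at hQ1
  rw [hmf2] at hQ2
  -- from the second equation, q2 lies on the line
  have hE : l20 * (1 - q1 - q2) - 1 - δ + l21 * q1 = 0 := by
    have h2 : q2 * (l20 * (1 - q1 - q2) - 1 - δ + l21 * q1) = 0 := by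
      linear_combination hQ2
    exact (mul_eq_zero.1 h2).resolve_left (ne_of_gt hq2)
  have hq2l : l20 * q2 = (l20 - 1 - δ) - (l20 - l21) * q1 := by
    linear_combination -hE
  have hq2eq : q2 = φ q1 := by
    simp only [hφ]
    field_simp
    linarith [hq2l]
  -- feasibility of q1
  have hBq : (l20 - l21) * q1 < l20 - 1 - δ := by
    have := mul_pos hl20 hq2
    linarith [hq2l]
  have hSq : l21 * q1 < 1 + δ := by
    have := mul_pos hl20 (show 0 < 1 - q1 - q2 by linarith)
    linarith [hE]
  have hq1R : q1 < R := (hfeq q1 hq1).1 ⟨hBq, hSq⟩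
  -- g q1 = 0
  have hgq : g q1 = 0 := by
    have h1 : (meanField l10 l20 l21 δ (q1, φ q1)).1 = 0 := by
      rw [← hq2eq]
      rw [hmf1]; linarith [hQ1]
    rw [hF1] at h1
    field_simp at h1
    simpa using h1
  -- uniqueness of the root of the quadratic in (0, R)
  have hgx' : a * x ^ 2 + b' * x + c = 0 := hgx
  have hgq' : a * q1 ^ 2 + b' * q1 + c = 0 := hgq
  have hgR' : a * R ^ 2 + b' * R + c < 0 := hgR
  have hxq : q1 = x := by
    by_contra hne
    have hd : q1 - x ≠ 0 := sub_ne_zero.2 hne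
    have h1 : a * (q1 + x) + b' = 0 := by
      have h0 : (q1 - x) * (a * (q1 + x) + b') = 0 := by
        linear_combination hgq' - hgx'
      exact (mul_eq_zero.1 h0).resolve_left hd
    have h2 : c = a * (q1 * x) := by
      linear_combination hgx' - x * h1
    have ha' : 0 < a := by nlinarith [mul_pos hq1 hx0]
    have h3 : a * R ^ 2 + b' * R + c = a * ((R - q1) * (R - x)) := by
      linear_combination R * h1 + h2
    nlinarith [mul_pos (sub_pos.2 hq1R) (sub_pos.2 hxR), mul_pos ha'
      (mul_pos (sub_pos.2 hq1R) (sub_pos.2 hxR))]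
  rw [Prod.mk.injEq]
  exact ⟨hxq, by rw [hq2eq, hxq]⟩
end

section
/- Suppose δ > 0, λ10 > 1 and λ20/λ10 + λ21·(1 − 1/λ10) > 1 + δ. Then there is exactly one point (u1,u2) in the interior of Λ (i.e., with u1 > 0, u2 > 0 and u1 + u2 < 1) satisfying F1(u1,u2) = 0 and F2(u1,u2) = 0. -/
open Filter Topology Set

set_option maxHeartbeats 1000000

private lemma ivt_quad {A B C p q : ℝ} (hpq : p < q)
    (hp : 0 < A*p^2 + B*p + C) (hq : A*q^2 + B*q + C < 0) :
    ∃ x, p < x ∧ x < q ∧ A*x^2 + B*x + C = 0 := by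
  have hc : ContinuousOn (fun x : ℝ => A*x^2+B*x+C) (Set.Icc p q) :=
    Continuous.continuousOn (by continuity)
  obtain ⟨x, hx, hx0⟩ := intermediate_value_Ioo' hpq.le hc ⟨hq, hp⟩
  exact ⟨x, hx.1, hx.2, hx0⟩

private lemma affine_pos {m c P Q x : ℝ} (hP : 0 ≤ m*P+c) (hQ : 0 ≤ m*Q+c)
    (hs : 0 < m*P+c + (m*Q+c)) (h1 : P < x) (h2 : x < Q) : 0 < m*x+c := by
  rcases lt_trichotomy m 0 with h|h|h
  · nlinarith [mul_pos_of_neg_of_neg h (by linarith : x - Q < 0)]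
  · subst h; linarith
  · nlinarith [mul_pos h (by linarith : 0 < x - P)]

private lemma quad_unique_lt {A B C P Q x1 x2 : ℝ}
    (h1 : A*x1^2+B*x1+C = 0) (h2 : A*x2^2+B*x2+C = 0)
    (hP1 : P < x1) (h12 : x1 < x2) (h2Q : x2 < Q)
    (hP : 0 ≤ A*P^2+B*P+C) (hQ : A*Q^2+B*Q+C ≤ 0)
    (hnz : ¬(A = 0 ∧ B = 0 ∧ C = 0)) : False := by
  have hne : x1 - x2 ≠ 0 := sub_ne_zero.2 (ne_of_lt h12)
  have key : A*(x1+x2)+B = 0 := by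
    have h3 : (x1-x2)*(A*(x1+x2)+B) = 0 := by linear_combination h1 - h2
    rcases mul_eq_zero.1 h3 with h|h
    · exact absurd h hne
    · exact h
  have hC : C = A*(x1*x2) := by linear_combination h1 - x1*key
  have eP : A*P^2+B*P+C = A*((P-x1)*(P-x2)) := by linear_combination P*key + hC
  have eQ : A*Q^2+B*Q+C = A*((Q-x1)*(Q-x2)) := by linear_combination Q*key + hC
  rcases lt_trichotomy A 0 with h|h|h
  · have hpos : 0 < (P-x1)*(P-x2) := by nlinarith
    nlinarith [mul_neg_of_neg_of_pos h hpos]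
  · exact hnz ⟨h, by linear_combination key - (x1+x2)*h, by linear_combination hC + x1*x2*h⟩
  · have hpos : 0 < (Q-x1)*(Q-x2) := by nlinarith
    nlinarith [mul_pos h hpos]

private lemma quad_unique {A B C P Q x1 x2 : ℝ}
    (h1 : A*x1^2+B*x1+C = 0) (h2 : A*x2^2+B*x2+C = 0)
    (hx1 : P < x1 ∧ x1 < Q) (hx2 : P < x2 ∧ x2 < Q)
    (hP : 0 ≤ A*P^2+B*P+C) (hQ : A*Q^2+B*Q+C ≤ 0)
    (hnz : ¬(A = 0 ∧ B = 0 ∧ C = 0)) : x1 = x2 := by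
  rcases lt_trichotomy x1 x2 with h|h|h
  · exact (quad_unique_lt h1 h2 hx1.1 h hx2.2 hP hQ hnz).elim
  · exact h
  · exact (quad_unique_lt h2 h1 hx2.1 h hx1.2 hP hQ hnz).elim

private lemma exists_feasible_root {A B C l20 l21 δ P Q : ℝ} (hpq : P < Q)
    (hψP : 0 < A*P^2+B*P+C) (hψQ : A*Q^2+B*Q+C < 0)
    (h1P : 0 ≤ P)
    (h2P : 0 ≤ 1+δ-l21*P) (h2Q : 0 ≤ 1+δ-l21*Q) (h2s : 0 < (1+δ-l21*P)+(1+δ-l21*Q))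
    (h3P : 0 ≤ (l20-1-δ)+(l21-l20)*P) (h3Q : 0 ≤ (l20-1-δ)+(l21-l20)*Q)
    (h3s : 0 < ((l20-1-δ)+(l21-l20)*P)+((l20-1-δ)+(l21-l20)*Q)) :
    ∃ x, (P < x ∧ x < Q) ∧ A*x^2+B*x+C = 0 ∧ 0 < x ∧ 0 < 1+δ-l21*x ∧
      0 < (l20-1-δ)+(l21-l20)*x := by
  obtain ⟨x, hx1, hx2, hx0⟩ := ivt_quad hpq hψP hψQ
  refine ⟨x, ⟨hx1, hx2⟩, hx0, by linarith, ?_, ?_⟩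
  · have := affine_pos (m := -l21) (c := 1+δ) (by linarith) (by linarith) (by linarith) hx1 hx2
    linarith
  · have := affine_pos (m := l21-l20) (c := l20-1-δ) (by linarith) (by linarith) (by linarith) hx1 hx2
    linarith

private lemma caseA (l10 l21 δ : ℝ) (h10 : 0 ≤ l10) (h21 : 0 ≤ l21)
    (hδpos : 0 < δ) (h10gt : 1 < l10)
    (key : (1+δ)*l10 < 0 + l21*(l10-1)) :
    ∃! p : ℝ × ℝ, (0 < p.1 ∧ 0 < p.2 ∧ p.1 + p.2 < 1) ∧
      (meanField l10 0 l21 δ p).1 = 0 ∧ (meanField l10 0 l21 δ p).2 = 0 := by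
  have hl10 : (0:ℝ) < l10 := by linarith
  have hl21 : 1+δ < l21 := by
    by_contra h
    push_neg at h
    nlinarith [mul_le_mul_of_nonneg_right h (by linarith : (0:ℝ) ≤ l10 - 1)]
  have hl21pos : 0 < l21 := by linarith
  have hl21ne : l21 ≠ 0 := ne_of_gt hl21pos
  set x1 : ℝ := (1+δ)/l21 with hx1def
  have hx1pos : 0 < x1 := div_pos (by linarith) hl21pos
  have hx1rel : l21 * x1 = 1+δ := by
    rw [hx1def]; field_simp
  have hx1lt : 1 < l10*(1-x1) := by
    have h1 : x1 < (l10-1)/l10 := by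
      rw [hx1def, div_lt_div_iff₀ hl21pos hl10]; nlinarith
    have h2 := (lt_div_iff₀ hl10).1 h1
    nlinarith
  have hDpos : 0 < l10*x1 + 1 := by nlinarith
  have hDne : l10*x1 + 1 ≠ 0 := ne_of_gt hDpos
  set u2 : ℝ := x1*(l10*(1-x1)-1)/(l10*x1+1) with hu2def
  have hu2pos : 0 < u2 := div_pos (by nlinarith) hDpos
  have hu2rel : u2*(l10*x1+1) = x1*(l10*(1-x1)-1) := by
    rw [hu2def]; field_simp
  refine ⟨(x1, u2), ⟨⟨hx1pos, hu2pos, ?_⟩, ?_, ?_⟩, ?_⟩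
  · nlinarith [hu2rel]
  · show l10*x1*(1-x1-u2) - x1 + δ*u2 - l21*x1*u2 = 0
    linear_combination (-1)*hu2rel + (-u2)*hx1rel
  · show 0*u2*(1-x1-u2) - u2 - δ*u2 + l21*x1*u2 = 0
    linear_combination u2*hx1rel
  · rintro ⟨a, b⟩ ⟨⟨ha, hb, hab⟩, hF1, hF2⟩
    simp only [meanField] at hF1 hF2
    have hbne : b ≠ 0 := ne_of_gt hb
    have hax : a = x1 := by
      have h0 : b*(l21*a - 1 - δ) = 0 := by linear_combination hF2
      rcases mul_eq_zero.1 h0 with h|h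
      · exact absurd h hbne
      · rw [hx1def, eq_div_iff hl21ne]; linarith
    subst hax
    have hbu : b*(l10*x1+1) = u2*(l10*x1+1) := by
      rw [hu2rel]; linear_combination (-1)*hF1 + (-b)*hx1rel
    have : b = u2 := mul_right_cancel₀ hDne hbu
    simp [this]

private lemma mainB (l10 l20 l21 δ : ℝ) (h10 : 0 ≤ l10) (h20 : 0 < l20) (h21 : 0 ≤ l21)
    (hδpos : 0 < δ) (h10gt : 1 < l10)
    (key : (1+δ)*l10 < l20 + l21*(l10-1))
    (Aq Bq Cq : ℝ)
    (hAdef : Aq = -(l21*(l10+l21-l20)))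
    (hBdef : Bq = l10*(1+δ) - l20 + δ*(l21-l20) - l21*(l20-1-δ))
    (hCdef : Cq = δ*(l20-1-δ))
    (hl21big : l20 ≤ 1+δ → 1+δ < l21) :
    ∃ P Q : ℝ, P < Q ∧
      0 ≤ Aq*P^2+Bq*P+Cq ∧ Aq*Q^2+Bq*Q+Cq ≤ 0 ∧
      (∀ x : ℝ, 0 < x → 0 < 1+δ-l21*x → 0 < (l20-1-δ)+(l21-l20)*x → P < x ∧ x < Q) ∧
      (∃ x : ℝ, (P < x ∧ x < Q) ∧ Aq*x^2+Bq*x+Cq = 0 ∧ 0 < x ∧ 0 < 1+δ-l21*x ∧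
        0 < (l20-1-δ)+(l21-l20)*x) := by
  have hl10 : (0:ℝ) < l10 := by linarith
  have hinv : l10*(1/l10) = 1 := by field_simp
  have ustar : 0 < (l20-1-δ)+(l21-l20)*(1-1/l10) := by
    rw [show (l20-1-δ)+(l21-l20)*(1-1/l10) = (l20 + l21*(l10-1) - (1+δ)*l10)/l10 from by
      field_simp; ring]
    exact div_pos (by linarith) hl10
  have hψs : ∀ y : ℝ, l21*y = 1+δ →
      Aq*y^2+Bq*y+Cq = -(l20*y + ((l20-1-δ)+(l21-l20)*y)) := by
    intro y h
    rw [hAdef, hBdef, hCdef]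
    linear_combination (-(l10*y + (l20-1-δ)+(l21-l20)*y))*h
  have hψz : ∀ y : ℝ, (l20-1-δ)+(l21-l20)*y = 0 →
      Aq*y^2+Bq*y+Cq = y*l20*(l10*(1-y)-1) := by
    intro y h
    rw [hAdef, hBdef, hCdef]
    linear_combination (δ - l21*y - l10*y)*h
  rcases le_or_gt l21 l20 with hle | hlt
  · -- Branch B1 : l21 ≤ l20
    have hl20big : 1+δ < l20 := by
      by_contra h'
      push_neg at h'
      linarith [mul_le_mul_of_nonneg_right hle (by linarith : (0:ℝ) ≤ l10-1),
        mul_le_mul_of_nonneg_right h' (le_of_lt hl10)]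
    have hψ0 : 0 < Aq*(0:ℝ)^2+Bq*0+Cq := by
      rw [hCdef]; linarith [mul_pos hδpos (show (0:ℝ) < l20-1-δ by linarith)]
    rcases eq_or_lt_of_le hle with heq | hlt2
    · -- B1a : l21 = l20
      have hl21pos : 0 < l21 := by linarith
      set q1 : ℝ := (1+δ)/l21 with hq1def
      have hq1pos : 0 < q1 := div_pos (by linarith) hl21pos
      have hq1rel : l21*q1 = 1+δ := by rw [hq1def]; field_simp
      have hzq1 : (l21-l20)*q1 = 0 := by rw [heq]; ring
      have hψq1neg : Aq*q1^2+Bq*q1+Cq < 0 := by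
        rw [hψs q1 hq1rel]
        linarith [mul_pos h20 hq1pos]
      refine ⟨0, q1, hq1pos, le_of_lt hψ0, le_of_lt hψq1neg, ?_, ?_⟩
      · intro x hx1 hx2 hx3
        exact ⟨hx1, (mul_lt_mul_iff_right₀ hl21pos).1 (by linarith [hq1rel])⟩
      · exact exists_feasible_root hq1pos hψ0 hψq1neg le_rfl (by linarith)
          (by linarith [hq1rel]) (by linarith [hq1rel])
          (by linarith [hzq1]) (by linarith [hzq1]) (by linarith [hzq1])
    · -- B1b : l21 < l20
      set q2 : ℝ := (l20-1-δ)/(l20-l21) with hq2def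
      have hden : 0 < l20 - l21 := by linarith
      have hq2pos : 0 < q2 := div_pos (by linarith) hden
      have hq2rel : (l20-l21)*q2 = l20-1-δ := by rw [hq2def]; field_simp
      have hq2l3 : (l20-1-δ)+(l21-l20)*q2 = 0 := by linear_combination -hq2rel
      have hq2star : 1-1/l10 < q2 := by
        by_contra h'
        push_neg at h'
        linarith [mul_nonneg (le_of_lt hden) (by linarith : (0:ℝ) ≤ (1-1/l10) - q2),
          ustar, hq2l3]
      have hψq2neg : Aq*q2^2+Bq*q2+Cq < 0 := by
        rw [hψz q2 hq2l3]
        have h2 : l10*(1-q2) < 1 := by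
          have h3 := mul_lt_mul_of_pos_left hq2star hl10
          linarith [hinv]
        exact mul_neg_of_pos_of_neg (mul_pos hq2pos h20) (by linarith)
      have hmemq2 : ∀ x : ℝ, 0 < (l20-1-δ)+(l21-l20)*x → x < q2 := by
        intro x hx3
        by_contra h'
        push_neg at h'
        linarith [mul_nonneg (le_of_lt hden) (by linarith : (0:ℝ) ≤ x - q2), hq2l3]
      rcases eq_or_lt_of_le h21 with h21z | h21pos
      · -- B1b-i : l21 = 0
        have hz2 : l21*q2 = 0 := by rw [← h21z]; ring
        refine ⟨0, q2, hq2pos, le_of_lt hψ0, le_of_lt hψq2neg, ?_, ?_⟩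
        · intro x hx1 hx2 hx3
          exact ⟨hx1, hmemq2 x hx3⟩
        · exact exists_feasible_root hq2pos hψ0 hψq2neg le_rfl (by linarith)
            (by linarith [hz2]) (by linarith [hz2])
            (by linarith) (by linarith [hq2l3]) (by linarith [hq2l3])
      · -- B1b-ii : 0 < l21 < l20
        set q1 : ℝ := (1+δ)/l21 with hq1def
        have hq1pos : 0 < q1 := div_pos (by linarith) h21pos
        have hq1rel : l21*q1 = 1+δ := by rw [hq1def]; field_simp
        rcases le_or_gt q1 q2 with hcmp | hcmp
        · -- Q = q1
          have hl3q1 : 0 ≤ (l20-1-δ)+(l21-l20)*q1 := by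
            linarith [mul_nonneg (le_of_lt hden) (by linarith : (0:ℝ) ≤ q2 - q1), hq2l3]
          have hψq1neg : Aq*q1^2+Bq*q1+Cq < 0 := by
            rw [hψs q1 hq1rel]
            linarith [mul_pos h20 hq1pos]
          refine ⟨0, q1, hq1pos, le_of_lt hψ0, le_of_lt hψq1neg, ?_, ?_⟩
          · intro x hx1 hx2 hx3
            exact ⟨hx1, (mul_lt_mul_iff_right₀ h21pos).1 (by linarith [hq1rel])⟩
          · exact exists_feasible_root hq1pos hψ0 hψq1neg le_rfl (by linarith)
              (by linarith [hq1rel]) (by linarith [hq1rel])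
              (by linarith) hl3q1 (by linarith)
        · -- Q = q2 < q1
          have hl2q2 : 0 ≤ 1+δ-l21*q2 := by
            linarith [mul_lt_mul_of_pos_left hcmp h21pos, hq1rel]
          refine ⟨0, q2, hq2pos, le_of_lt hψ0, le_of_lt hψq2neg, ?_, ?_⟩
          · intro x hx1 hx2 hx3
            exact ⟨hx1, hmemq2 x hx3⟩
          · exact exists_feasible_root hq2pos hψ0 hψq2neg le_rfl (by linarith)
              hl2q2 (by linarith)
              (by linarith) (by linarith [hq2l3]) (by linarith [hq2l3])
  · -- Branch B2 : l20 < l21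
    have hl21pos : 0 < l21 := by linarith
    have hden : 0 < l21 - l20 := by linarith
    set q1 : ℝ := (1+δ)/l21 with hq1def
    have hq1pos : 0 < q1 := div_pos (by linarith) hl21pos
    have hq1rel : l21*q1 = 1+δ := by rw [hq1def]; field_simp
    have hmemq1 : ∀ x : ℝ, 0 < 1+δ-l21*x → x < q1 := by
      intro x hx2
      exact (mul_lt_mul_iff_right₀ hl21pos).1 (by linarith [hq1rel])
    rcases lt_trichotomy l20 (1+δ) with hcase | hcase | hcase
    · -- B2a : l20 < 1+δ
      have hl21b : 1+δ < l21 := hl21big (le_of_lt hcase)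
      set xc : ℝ := (1+δ-l20)/(l21-l20) with hxcdef
      have hxcpos : 0 < xc := div_pos (by linarith) hden
      have hxcrel : (l21-l20)*xc = 1+δ-l20 := by rw [hxcdef]; field_simp
      have hxcl3 : (l20-1-δ)+(l21-l20)*xc = 0 := by linear_combination hxcrel
      have hxcstar : xc < 1-1/l10 := by
        by_contra h'
        push_neg at h'
        linarith [mul_nonneg (le_of_lt hden) (by linarith : (0:ℝ) ≤ xc - (1-1/l10)),
          ustar, hxcl3]
      have hPQ : xc < q1 := by
        rw [hxcdef, hq1def, div_lt_div_iff₀ hden hl21pos]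
        nlinarith [mul_lt_mul_of_pos_left hl21b h20]
      have hψxc : 0 < Aq*xc^2+Bq*xc+Cq := by
        rw [hψz xc hxcl3]
        have h2 : 1 < l10*(1-xc) := by
          have h3 := mul_lt_mul_of_pos_left hxcstar hl10
          linarith [hinv]
        exact mul_pos (mul_pos hxcpos h20) (by linarith)
      have hl3q1 : 0 < (l20-1-δ)+(l21-l20)*q1 := by
        linarith [mul_pos hden (by linarith : (0:ℝ) < q1 - xc), hxcl3]
      have hψq1neg : Aq*q1^2+Bq*q1+Cq < 0 := by
        rw [hψs q1 hq1rel]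
        linarith [mul_pos h20 hq1pos]
      have hl2xc : 0 < 1+δ-l21*xc := by
        linarith [mul_lt_mul_of_pos_left hPQ hl21pos, hq1rel]
      refine ⟨xc, q1, hPQ, le_of_lt hψxc, le_of_lt hψq1neg, ?_, ?_⟩
      · intro x hx1 hx2 hx3
        refine ⟨?_, hmemq1 x hx2⟩
        by_contra h'
        push_neg at h'
        linarith [mul_nonneg (le_of_lt hden) (by linarith : (0:ℝ) ≤ xc - x), hxcl3]
      · exact exists_feasible_root hPQ hψxc hψq1neg (le_of_lt hxcpos)
          (le_of_lt hl2xc) (by linarith [hq1rel]) (by linarith)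
          (by linarith [hxcl3]) (le_of_lt hl3q1) (by linarith [hxcl3])
    · -- B2b : l20 = 1+δ  (corner case)
      have hl21b : 1+δ < l21 := hl21big (le_of_eq hcase)
      have hCq0 : Cq = 0 := by rw [hCdef, hcase]; ring
      have hzc : l20-1-δ = 0 := by rw [hcase]; ring
      have hl3q1 : 0 < (l20-1-δ)+(l21-l20)*q1 := by
        linarith [mul_pos hden hq1pos]
      have hψq1neg : Aq*q1^2+Bq*q1+Cq < 0 := by
        rw [hψs q1 hq1rel]
        linarith [mul_pos h20 hq1pos]
      have hψ0' : 0 ≤ Aq*(0:ℝ)^2+Bq*0+Cq := by rw [hCq0]; linarith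
      refine ⟨0, q1, hq1pos, hψ0', le_of_lt hψq1neg, ?_, ?_⟩
      · intro x hx1 hx2 hx3
        exact ⟨hx1, hmemq1 x hx2⟩
      · -- explicit root
        have hApos : 0 < l21*(l10+l21-l20) := mul_pos hl21pos (by linarith)
        have hBpos : 0 < Bq := by
          rw [hBdef, hcase]
          nlinarith [mul_pos hδpos (show (0:ℝ) < l21-1-δ by linarith),
            mul_pos (show (0:ℝ) < 1+δ by linarith) (show (0:ℝ) < l10-1 by linarith)]
        set x0 : ℝ := Bq/(l21*(l10+l21-l20)) with hx0def
        have hx0pos : 0 < x0 := div_pos hBpos hApos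
        have hx0rel : l21*(l10+l21-l20)*x0 = Bq := by rw [hx0def]; exact mul_div_cancel₀ Bq (ne_of_gt hApos)
        have hroot : Aq*x0^2+Bq*x0+Cq = 0 := by
          rw [hAdef, hCdef]
          linear_combination (-x0)*hx0rel + δ*hcase
        have hq1lin : Aq*q1 + Bq < 0 := by
          by_contra h'
          push_neg at h'
          nlinarith [mul_nonneg (le_of_lt hq1pos) h', hCq0, hψq1neg]
        have hx0lt : x0 < q1 := by
          rw [hx0def, div_lt_iff₀ hApos]
          rw [hAdef] at hq1lin
          nlinarith
        refine ⟨x0, ⟨hx0pos, hx0lt⟩, hroot, hx0pos, ?_, ?_⟩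
        · linarith [mul_lt_mul_of_pos_left hx0lt hl21pos, hq1rel]
        · linarith [mul_pos hden hx0pos]
    · -- B2c : 1+δ < l20
      have hψ0 : 0 < Aq*(0:ℝ)^2+Bq*0+Cq := by
        rw [hCdef]; linarith [mul_pos hδpos (show (0:ℝ) < l20-1-δ by linarith)]
      have hl3q1 : 0 < (l20-1-δ)+(l21-l20)*q1 := by
        linarith [mul_pos hden hq1pos]
      have hψq1neg : Aq*q1^2+Bq*q1+Cq < 0 := by
        rw [hψs q1 hq1rel]
        linarith [mul_pos h20 hq1pos]
      refine ⟨0, q1, hq1pos, le_of_lt hψ0, le_of_lt hψq1neg, ?_, ?_⟩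
      · intro x hx1 hx2 hx3
        exact ⟨hx1, hmemq1 x hx2⟩
      · exact exists_feasible_root hq1pos hψ0 hψq1neg le_rfl (by linarith)
          (by linarith [hq1rel]) (by linarith [hq1rel])
          (by linarith) (le_of_lt hl3q1) (by linarith)

private lemma caseB (l10 l20 l21 δ : ℝ) (h10 : 0 ≤ l10) (h20 : 0 < l20) (h21 : 0 ≤ l21)
    (hδpos : 0 < δ) (h10gt : 1 < l10)
    (key : (1+δ)*l10 < l20 + l21*(l10-1)) :
    ∃! p : ℝ × ℝ, (0 < p.1 ∧ 0 < p.2 ∧ p.1 + p.2 < 1) ∧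
      (meanField l10 l20 l21 δ p).1 = 0 ∧ (meanField l10 l20 l21 δ p).2 = 0 := by
  have hl10 : (0:ℝ) < l10 := by linarith
  have hl20ne : l20 ≠ 0 := ne_of_gt h20
  set Aq : ℝ := -(l21*(l10+l21-l20)) with hAdef
  set Bq : ℝ := l10*(1+δ) - l20 + δ*(l21-l20) - l21*(l20-1-δ) with hBdef
  set Cq : ℝ := δ*(l20-1-δ) with hCdef
  have hpsiF1 : ∀ x u : ℝ, l20*u = (l20-1-δ)+(l21-l20)*x →
      l20*(l10*x*(1-x-u) - x + δ*u - l21*x*u) = Aq*x^2+Bq*x+Cq := by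
    intro x u h
    rw [hAdef, hBdef, hCdef]
    linear_combination (δ - l10*x - l21*x)*h
  have hl21big : l20 ≤ 1+δ → 1+δ < l21 := by
    intro h
    by_contra h'
    push_neg at h'
    nlinarith [mul_le_mul_of_nonneg_right h' (by linarith : (0:ℝ) ≤ l10 - 1)]
  have hnz : ¬(Aq = 0 ∧ Bq = 0 ∧ Cq = 0) := by
    rintro ⟨hA0, hB0, hC0⟩
    rw [hCdef] at hC0
    have h1 : l20 = 1+δ := by
      rcases mul_eq_zero.1 hC0 with h|h
      · linarith
      · linarith
    have h2 := hl21big (le_of_eq h1)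
    rw [hAdef] at hA0
    nlinarith
  have main := mainB l10 l20 l21 δ h10 h20 h21 hδpos h10gt key Aq Bq Cq hAdef hBdef hCdef hl21big
  obtain ⟨P, Q, hPQ, hψP, hψQ, hmem, x, hxPQ, hxroot, hx1, hx2, hx3⟩ := main
  set ux : ℝ := ((l20-1-δ)+(l21-l20)*x)/l20 with huxdef
  have hrelx : l20*ux = (l20-1-δ)+(l21-l20)*x := by rw [huxdef]; field_simp
  have huxpos : 0 < ux := div_pos hx3 h20
  have hsx : l20*(1-x-ux) = 1+δ-l21*x := by linear_combination -hrelx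
  refine ⟨(x, ux), ⟨⟨hx1, huxpos, ?_⟩, ?_, ?_⟩, ?_⟩
  · nlinarith [hsx]
  · show l10*x*(1-x-ux) - x + δ*ux - l21*x*ux = 0
    have h := hpsiF1 x ux hrelx
    rw [hxroot] at h
    exact (mul_eq_zero.1 h).resolve_left hl20ne
  · show l20*ux*(1-x-ux) - ux - δ*ux + l21*x*ux = 0
    linear_combination ux*hsx
  · rintro ⟨a, b⟩ ⟨⟨ha, hb, hab⟩, hF1, hF2⟩
    simp only [meanField] at hF1 hF2
    have hbne : b ≠ 0 := ne_of_gt hb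
    have hrel : l20*(1-a-b) = 1+δ-l21*a := by
      have h0 : b*(l20*(1-a-b) - (1+δ-l21*a)) = 0 := by linear_combination hF2
      rcases mul_eq_zero.1 h0 with h|h
      · exact absurd h hbne
      · linarith
    have hbrel : l20*b = (l20-1-δ)+(l21-l20)*a := by linear_combination -hrel
    have haroot : Aq*a^2+Bq*a+Cq = 0 := by
      have h := hpsiF1 a b hbrel
      rw [hF1] at h
      simpa using h.symm
    have h2a : 0 < 1+δ-l21*a := by
      rw [← hrel]; exact mul_pos h20 (by simp at ha hb hab; linarith)
    have h3a : 0 < (l20-1-δ)+(l21-l20)*a := by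
      rw [← hbrel]; exact mul_pos h20 hb
    have hmema := hmem a (by simpa using ha) h2a h3a
    have hax : a = x := quad_unique haroot hxroot hmema hxPQ hψP hψQ hnz
    subst hax
    have hbux : b = ux := by
      have : l20*b = l20*ux := by rw [hbrel, hrelx]
      exact mul_left_cancel₀ hl20ne this
    simp [hbux]

/-- If δ > 0, λ10 > 1 and the (2s invade 1s) inequality holds, there is exactly
one interior equilibrium. -/
theorem unique_interior_equilibrium_case_b
    (l10 l20 l21 δ : ℝ) (h10 : 0 ≤ l10) (h20 : 0 ≤ l20) (h21 : 0 ≤ l21) (hδ : 0 ≤ δ)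
    (hδpos : 0 < δ) (h10gt : 1 < l10)
    (h2in1 : l20 / l10 + l21 * (1 - 1 / l10) > 1 + δ) :
    ∃! p : ℝ × ℝ, (0 < p.1 ∧ 0 < p.2 ∧ p.1 + p.2 < 1) ∧
      (meanField l10 l20 l21 δ p).1 = 0 ∧ (meanField l10 l20 l21 δ p).2 = 0 := by
  have hl10 : (0:ℝ) < l10 := by linarith
  have key : (1+δ)*l10 < l20 + l21*(l10-1) := by
    have e : (l20/l10 + l21*(1-1/l10))*l10 = l20 + l21*(l10-1) := by
      field_simp
    have h := mul_lt_mul_of_pos_right h2in1 hl10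
    rw [e] at h
    linarith
  rcases eq_or_lt_of_le h20 with h|h
  · rw [← h]
    rw [← h] at key
    exact caseA l10 l21 δ h10 h21 hδpos h10gt key
  · exact caseB l10 l20 l21 δ h10 h h21 hδpos h10gt key
end

section
/- Suppose δ = 0, λ10 > 1, the inequality λ20/λ10 + λ21·(1 − 1/λ10) > 1 + δ does NOT hold, and λ10/λ20 − λ21·(1 − 1/λ20) > 1. Then there is no point (u1,u2) in the interior of Λ (i.e., with u1 > 0, u2 > 0 and u1 + u2 < 1) satisfying F1(u1,u2) = 0 and F2(u1,u2) = 0. -/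
open Filter Topology Set

/-- If δ = 0, λ10 > 1, the (2s invade 1s) inequality fails and the (1s invade 2s)
inequality holds, there is no interior equilibrium. -/
theorem no_interior_equilibrium
    (l10 l20 l21 δ : ℝ) (h10 : 0 ≤ l10) (h20 : 0 < l20) (h21 : 0 ≤ l21) (hδ : 0 ≤ δ)
    (hδ0 : δ = 0) (h10gt : 1 < l10)
    (h2in1fail : ¬ (l20 / l10 + l21 * (1 - 1 / l10) > 1 + δ))
    (h1in2 : l10 / l20 - l21 * (1 - 1 / l20) > 1) :
    ¬ ∃ p : ℝ × ℝ, (0 < p.1 ∧ 0 < p.2 ∧ p.1 + p.2 < 1) ∧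
      (meanField l10 l20 l21 δ p).1 = 0 ∧ (meanField l10 l20 l21 δ p).2 = 0 := by

  rintro ⟨⟨u1, u2⟩, ⟨hu1, hu2, hsum⟩, e1, e2⟩
  simp only [meanField, hδ0, zero_mul, add_zero, mul_zero, sub_zero] at e1 e2
  have hl10 : (0:ℝ) < l10 := lt_trans one_pos h10gt
  have hs : 0 < 1 - u1 - u2 := by linarith
  -- divide first equation by u1
  have key1 : l10 * (1 - u1 - u2) - 1 - l21 * u2 = 0 := by
    have h : u1 * (l10 * (1 - u1 - u2) - 1 - l21 * u2) = 0 := by ring_nf; ring_nf at e1; linarith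
    rcases mul_eq_zero.mp h with h | h
    · exact absurd h (ne_of_gt hu1)
    · exact h
  have key2 : l20 * (1 - u1 - u2) - 1 + l21 * u1 = 0 := by
    have h : u2 * (l20 * (1 - u1 - u2) - 1 + l21 * u1) = 0 := by ring_nf; ring_nf at e2; linarith
    rcases mul_eq_zero.mp h with h | h
    · exact absurd h (ne_of_gt hu2)
    · exact h
  push_neg at h2in1fail
  rw [hδ0, add_zero] at h2in1fail
  have hfail : l20 + l21 * (l10 - 1) ≤ l10 := by
    have h := h2in1fail
    rw [div_add' _ _ _ (ne_of_gt hl10)] at h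
    have := (div_le_one hl10).mp (by
      have : (l20 + l21 * (1 - 1 / l10) * l10) / l10 ≤ 1 := h
      calc (l20 + l21 * (l10 - 1)) / l10 = (l20 + l21 * (1 - 1 / l10) * l10) / l10 := by
            congr 1
            field_simp
        _ ≤ 1 := this)
    linarith
  have hin2 : l10 - l21 * (l20 - 1) > l20 := by
    have h := h1in2
    have h' : (l10 / l20 - l21 * (1 - 1 / l20)) * l20 > 1 * l20 := by
      exact (mul_lt_mul_iff_of_pos_right h20).mpr h
    have : (l10 / l20 - l21 * (1 - 1 / l20)) * l20 = l10 - l21 * (l20 - 1) := by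
      field_simp
    linarith [this ▸ h']
  nlinarith [mul_nonneg h21 (le_of_lt hu2), mul_nonneg h21 (le_of_lt hu1),
    mul_pos hs hl10, mul_le_mul_of_nonneg_right hfail (le_of_lt hs),
    mul_pos (mul_pos hu2 hs) h20, mul_nonneg h21 (le_of_lt hs)]
end

section
/- Let N ≥ 1 be an integer and let ξ : ℤ² → {0,1,2} be a configuration with card S_{e1}(ξ) = K1 and K1 ≤ N. Then any connected component of B_{e1} \ S_{e1}(ξ) of maximal cardinality (with respect to nearest-neighbor adjacency) has cardinality at least (2N)² − K1², which is at least 3N². -/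
open Set

/-- Nearest-neighbor adjacency on ℤ². -/
def adjZ2 (x y : ℤ × ℤ) : Prop := |x.1 - y.1| + |x.2 - y.2| = 1

/-- The box B_z = 2Nz + {−N, …, N−1}². -/
def box (N : ℕ) (z : ℤ × ℤ) : Set (ℤ × ℤ) :=
  {x | 2 * (N : ℤ) * z.1 - N ≤ x.1 ∧ x.1 ≤ 2 * (N : ℤ) * z.1 + N - 1 ∧
       2 * (N : ℤ) * z.2 - N ≤ x.2 ∧ x.2 ≤ 2 * (N : ℤ) * z.2 + N - 1}

/-- `y` is reachable from `x` by a path of adjacent points lying in `A`. -/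
def reachIn (A : Set (ℤ × ℤ)) (x y : ℤ × ℤ) : Prop :=
  x ∈ A ∧ Relation.ReflTransGen (fun a b => a ∈ A ∧ b ∈ A ∧ adjZ2 a b) x y

/-- `C` is a connected component of `A` (a maximal connected subset of `A`),
i.e. the set of points of `A` reachable within `A` from some point of `A`. -/
def IsComponent (A C : Set (ℤ × ℤ)) : Prop :=
  ∃ x ∈ A, C = {y | reachIn A x y}

/-- The step relation is symmetric. -/
lemma adj_step_symm (A : Set (ℤ × ℤ)) :
    Symmetric (fun a b => a ∈ A ∧ b ∈ A ∧ adjZ2 a b) := by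
  rintro p q ⟨hp, hq, hadj⟩
  refine ⟨hq, hp, ?_⟩
  unfold adjZ2 at *
  rw [abs_sub_comm q.1 p.1, abs_sub_comm q.2 p.2]
  exact hadj

lemma reach_vert_up_aux {A : Set (ℤ × ℤ)} (a b : ℤ) :
    ∀ (n : ℕ) (b' : ℤ), b' = b + n → (∀ t, b ≤ t → t ≤ b' → (a, t) ∈ A) →
    Relation.ReflTransGen (fun p q => p ∈ A ∧ q ∈ A ∧ adjZ2 p q) (a, b) (a, b') := by
  intro n
  induction n with
  | zero => intro b' hb _; rw [hb]; rw [show b + ((0:ℕ):ℤ) = b by omega]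
  | succ n ih =>
    intro b' hb h
    have step : Relation.ReflTransGen (fun p q => p ∈ A ∧ q ∈ A ∧ adjZ2 p q)
        (a, b) (a, b + n) := ih (b + n) rfl (fun t ht1 ht2 => h t ht1 (by omega))
    refine step.tail ⟨h (b + n) (by omega) (by omega), h b' (by omega) le_rfl, ?_⟩
    show |a - a| + |(b + n) - b'| = 1
    rw [show ((b + n) - b' : ℤ) = -1 by omega]
    simp

lemma reach_vert_up {A : Set (ℤ × ℤ)} (a b : ℤ) :
    ∀ b', b ≤ b' → (∀ t, b ≤ t → t ≤ b' → (a, t) ∈ A) →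
    Relation.ReflTransGen (fun p q => p ∈ A ∧ q ∈ A ∧ adjZ2 p q) (a, b) (a, b') := by
  intro b' hb' h
  exact reach_vert_up_aux a b (b' - b).toNat b' (by omega) h

lemma reach_vert {A : Set (ℤ × ℤ)} (a b b' : ℤ)
    (h : ∀ t, min b b' ≤ t → t ≤ max b b' → (a, t) ∈ A) :
    Relation.ReflTransGen (fun p q => p ∈ A ∧ q ∈ A ∧ adjZ2 p q) (a, b) (a, b') := by
  rcases le_total b b' with hle | hle
  · exact reach_vert_up a b b' hle fun t h1 h2 => h t (by omega) (by omega)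
  · exact (@Relation.ReflTransGen.stdSymm _ _ ⟨fun _ _ h => adj_step_symm A h⟩).symm _ _
      (reach_vert_up a b' b hle fun t h1 h2 => h t (by omega) (by omega))

lemma reach_horiz_up_aux {A : Set (ℤ × ℤ)} (b a : ℤ) :
    ∀ (n : ℕ) (a' : ℤ), a' = a + n → (∀ t, a ≤ t → t ≤ a' → (t, b) ∈ A) →
    Relation.ReflTransGen (fun p q => p ∈ A ∧ q ∈ A ∧ adjZ2 p q) (a, b) (a', b) := by
  intro n
  induction n with
  | zero => intro a' ha _; rw [ha]; rw [show a + ((0:ℕ):ℤ) = a by omega]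
  | succ n ih =>
    intro a' ha h
    have step : Relation.ReflTransGen (fun p q => p ∈ A ∧ q ∈ A ∧ adjZ2 p q)
        (a, b) (a + n, b) := ih (a + n) rfl (fun t ht1 ht2 => h t ht1 (by omega))
    refine step.tail ⟨h (a + n) (by omega) (by omega), h a' (by omega) le_rfl, ?_⟩
    show |(a + n) - a'| + |b - b| = 1
    rw [show ((a + n) - a' : ℤ) = -1 by omega]
    simp

lemma reach_horiz_up {A : Set (ℤ × ℤ)} (b a : ℤ) :
    ∀ a', a ≤ a' → (∀ t, a ≤ t → t ≤ a' → (t, b) ∈ A) →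
    Relation.ReflTransGen (fun p q => p ∈ A ∧ q ∈ A ∧ adjZ2 p q) (a, b) (a', b) := by
  intro a' ha' h
  exact reach_horiz_up_aux b a (a' - a).toNat a' (by omega) h

lemma reach_horiz {A : Set (ℤ × ℤ)} (b a a' : ℤ)
    (h : ∀ t, min a a' ≤ t → t ≤ max a a' → (t, b) ∈ A) :
    Relation.ReflTransGen (fun p q => p ∈ A ∧ q ∈ A ∧ adjZ2 p q) (a, b) (a', b) := by
  rcases le_total a a' with hle | hle
  · exact reach_horiz_up b a a' hle fun t h1 h2 => h t (by omega) (by omega)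
  · exact (@Relation.ReflTransGen.stdSymm _ _ ⟨fun _ _ h => adj_step_symm A h⟩).symm _ _
      (reach_horiz_up b a' a hle fun t h1 h2 => h t (by omega) (by omega))

/-- First part of the geometry lemma: a maximal-cardinality connected component of
B_{e₁} \ S_{e₁}(ξ) has at least (2N)² − K₁² ≥ 3N² vertices, when card S_{e₁}(ξ) = K₁ ≤ N. -/
theorem largest_component_card_lower_bound
    (N : ℕ) (hN : 1 ≤ N) (ξ : ℤ × ℤ → Fin 3) (K1 : ℕ)
    (hK1 : ({x ∈ box N (1, 0) | ξ x = 2}).ncard = K1) (hK1N : K1 ≤ N)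
    (C : Set (ℤ × ℤ))
    (hC : IsComponent (box N (1, 0) \ {x | ξ x = 2}) C)
    (hCmax : ∀ C', IsComponent (box N (1, 0) \ {x | ξ x = 2}) C' → C'.ncard ≤ C.ncard) :
    (2 * N) ^ 2 - K1 ^ 2 ≤ C.ncard ∧ 3 * N ^ 2 ≤ (2 * N) ^ 2 - K1 ^ 2 := by
  classical
  set A : Set (ℤ × ℤ) := box N (1, 0) \ {x | ξ x = 2} with hA
  -- the box as a Finset
  set Ic : Finset ℤ := Finset.Icc (N : ℤ) (3 * N - 1) with hIc
  set Jc : Finset ℤ := Finset.Icc (-(N : ℤ)) (N - 1) with hJc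
  set Bf : Finset (ℤ × ℤ) := Ic ×ˢ Jc with hBfdef
  have hBf : ∀ p : ℤ × ℤ, p ∈ Bf ↔ p ∈ box N (1, 0) := by
    intro p
    simp only [hBfdef, hIc, hJc, Finset.mem_product, Finset.mem_Icc, box, Set.mem_setOf_eq]
    constructor <;> intro h <;> omega
  have hIcard : Ic.card = 2 * N := by
    rw [hIc, Int.card_Icc]; omega
  have hJcard : Jc.card = 2 * N := by
    rw [hJc, Int.card_Icc]; omega
  have hBcard : Bf.card = 2 * N * (2 * N) := by
    rw [hBfdef, Finset.card_product, hIcard, hJcard]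
  -- the symbiont set as a Finset
  set Sf : Finset (ℤ × ℤ) := Bf.filter (fun p => ξ p = 2) with hSf
  have hSfcard : Sf.card = K1 := by
    have : ({x ∈ box N (1, 0) | ξ x = 2} : Set (ℤ × ℤ)) = ↑Sf := by
      ext p
      simp only [hSf, Finset.coe_filter, Set.mem_setOf_eq, hBf]
    rw [this, Set.ncard_coe_finset] at hK1
    exact hK1
  set badC : Finset ℤ := Sf.image Prod.fst with hbadC
  set badR : Finset ℤ := Sf.image Prod.snd with hbadR
  have hbadCcard : badC.card ≤ K1 := hSfcard ▸ Finset.card_image_le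
  have hbadRcard : badR.card ≤ K1 := hSfcard ▸ Finset.card_image_le
  -- choose a good column a0 and a good row b0
  obtain ⟨a0, ha0I, ha0⟩ : ∃ a ∈ Ic, a ∉ badC := by
    by_contra hc
    push_neg at hc
    have := Finset.card_le_card hc
    omega
  obtain ⟨b0, hb0J, hb0⟩ : ∃ b ∈ Jc, b ∉ badR := by
    by_contra hc
    push_neg at hc
    have := Finset.card_le_card hc
    omega
  -- good columns/rows lie entirely in A
  have hgoodcol : ∀ a ∈ Ic, a ∉ badC → ∀ t ∈ Jc, (a, t) ∈ A := by
    intro a haI haC t htJ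
    have hpB : ((a, t) : ℤ × ℤ) ∈ Bf := by
      rw [hBfdef, Finset.mem_product]; exact ⟨haI, htJ⟩
    refine ⟨(hBf _).1 hpB, ?_⟩
    intro hx
    exact haC (Finset.mem_image.2 ⟨(a, t), Finset.mem_filter.2 ⟨hpB, hx⟩, rfl⟩)
  have hgoodrow : ∀ b ∈ Jc, b ∉ badR → ∀ t ∈ Ic, (t, b) ∈ A := by
    intro b hbJ hbR t htI
    have hpB : ((t, b) : ℤ × ℤ) ∈ Bf := by
      rw [hBfdef, Finset.mem_product]; exact ⟨htI, hbJ⟩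
    refine ⟨(hBf _).1 hpB, ?_⟩
    intro hx
    exact hbR (Finset.mem_image.2 ⟨(t, b), Finset.mem_filter.2 ⟨hpB, hx⟩, rfl⟩)
  have hx0A : ((a0, b0) : ℤ × ℤ) ∈ A := hgoodcol a0 ha0I ha0 b0 hb0J
  -- the union of good lines
  set Uf : Finset (ℤ × ℤ) := Bf.filter (fun p => p.1 ∉ badC ∨ p.2 ∉ badR) with hUf
  -- cardinality of Uf
  have hUfcard : 2 * N * (2 * N) - K1 * K1 ≤ Uf.card := by
    have hsub : Bf ⊆ Uf ∪ badC ×ˢ badR := by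
      intro p hp
      rw [Finset.mem_union]
      by_cases hgood : p.1 ∉ badC ∨ p.2 ∉ badR
      · exact Or.inl (Finset.mem_filter.2 ⟨hp, hgood⟩)
      · push_neg at hgood
        exact Or.inr (Finset.mem_product.2 hgood)
    have h1 : Bf.card ≤ Uf.card + (badC ×ˢ badR).card :=
      le_trans (Finset.card_le_card hsub) (Finset.card_union_le _ _)
    have h2 : (badC ×ˢ badR).card ≤ K1 * K1 := by
      rw [Finset.card_product]
      exact Nat.mul_le_mul hbadCcard hbadRcard
    omega
  -- every point of Uf is reachable from (a0, b0) within A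
  have hreach : ∀ p ∈ Uf, reachIn A (a0, b0) p := by
    intro p hp
    rw [hUf, Finset.mem_filter] at hp
    obtain ⟨hpB, hgood⟩ := hp
    obtain ⟨hpI, hpJ⟩ := Finset.mem_product.1 hpB
    refine ⟨hx0A, ?_⟩
    rw [hIc, Finset.mem_Icc] at hpI ha0I
    rw [hJc, Finset.mem_Icc] at hpJ hb0J
    rcases hgood with hgc | hgr
    · -- go along row b0 then along column p.1
      have h1 : Relation.ReflTransGen (fun a b => a ∈ A ∧ b ∈ A ∧ adjZ2 a b)
          (a0, b0) (p.1, b0) := by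
        apply reach_horiz
        intro t ht1 ht2
        exact hgoodrow b0 (by rw [hJc, Finset.mem_Icc]; omega) hb0 t
          (by rw [hIc, Finset.mem_Icc]; omega)
      have h2 : Relation.ReflTransGen (fun a b => a ∈ A ∧ b ∈ A ∧ adjZ2 a b)
          (p.1, b0) (p.1, p.2) := by
        apply reach_vert
        intro t ht1 ht2
        exact hgoodcol p.1 (by rw [hIc, Finset.mem_Icc]; omega) hgc t
          (by rw [hJc, Finset.mem_Icc]; omega)
      exact h1.trans h2
    · -- go along column a0 then along row p.2
      have h1 : Relation.ReflTransGen (fun a b => a ∈ A ∧ b ∈ A ∧ adjZ2 a b)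
          (a0, b0) (a0, p.2) := by
        apply reach_vert
        intro t ht1 ht2
        exact hgoodcol a0 (by rw [hIc, Finset.mem_Icc]; omega) ha0 t
          (by rw [hJc, Finset.mem_Icc]; omega)
      have h2 : Relation.ReflTransGen (fun a b => a ∈ A ∧ b ∈ A ∧ adjZ2 a b)
          (a0, p.2) (p.1, p.2) := by
        apply reach_horiz
        intro t ht1 ht2
        exact hgoodrow p.2 (by rw [hJc, Finset.mem_Icc]; omega) hgr t
          (by rw [hIc, Finset.mem_Icc]; omega)
      exact h1.trans h2
  -- the component of (a0, b0)
  set C' : Set (ℤ × ℤ) := {y | reachIn A (a0, b0) y} with hC'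
  have hC'comp : IsComponent A C' := ⟨(a0, b0), hx0A, rfl⟩
  have hC'subA : C' ⊆ A := by
    rintro y ⟨hy0, hpath⟩
    induction hpath with
    | refl => exact hy0
    | tail _ hstep _ => exact hstep.2.1
  have hboxfin : (box N (1, 0)).Finite :=
    Bf.finite_toSet.subset (fun p hp => (hBf p).2 hp)
  have hC'fin : C'.Finite := hboxfin.subset (fun y hy => (hC'subA hy).1)
  have hUfsub : ↑Uf ⊆ C' := fun p hp => hreach p hp
  have hmain : 2 * N * (2 * N) - K1 * K1 ≤ C.ncard := by
    calc 2 * N * (2 * N) - K1 * K1 ≤ Uf.card := hUfcard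
      _ = (↑Uf : Set (ℤ × ℤ)).ncard := (Set.ncard_coe_finset Uf).symm
      _ ≤ C'.ncard := Set.ncard_le_ncard hUfsub hC'fin
      _ ≤ C.ncard := hCmax C' hC'comp
  have hsq : (2 * N) ^ 2 = 2 * N * (2 * N) := by ring
  have hsq2 : K1 ^ 2 = K1 * K1 := by ring
  have hK1sq : K1 * K1 ≤ N * N := Nat.mul_le_mul hK1N hK1N
  constructor
  · rw [hsq, hsq2]; exact hmain
  · have h3 : 3 * N ^ 2 = 3 * (N * N) := by ring
    have h4 : 2 * N * (2 * N) = 4 * (N * N) := by ring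
    rw [h3, hsq, hsq2, h4]
    omega
end
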